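/- arXiv:1912.07279 — 3 statements merged into one kernel-verified Lean document; each statement's English description precedes it below -/
import Mathlib

section
/- (Schur's theorem on multipliers.) Let 𝒜 be an S-ring over a finite abelian group G, X a basic set of 𝒜, and m an integer coprime to |G|. Then X^{(m)} = {x^m : x ∈ X} is again a basic set of 𝒜; in other words, the automorphism σ_m : g ↦ g^m of G is a Cayley isomorphism from 𝒜 to itself. -/
open scoped Pointwise

/-- The number of representations of `z` as `x * y` with `x ∈ X`, `y ∈ Y`
(used for the structure constants of an S-ring). -/
def structConst {G : Type*} [Group G] [DecidableEq G] (X Y : Finset G) (z : G) : ℕ :=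
  ((X ×ˢ Y).filter (fun q => q.1 * q.2 = z)).card

/-- An S-ring (Schur ring) over a finite group `G`, given by its partition into basic sets:
the partition contains `{1}`, is closed under inversion, and the products of the
characteristic sums of two blocks are integral linear combinations of characteristic sums,
i.e. the number of representations `z = x * y` (`x ∈ X`, `y ∈ Y`) is constant for `z`
ranging over a block `Z`. -/
structure SRing (G : Type*) [Group G] [Fintype G] [DecidableEq G] where
  basicSets : Finset (Finset G)
  nonempty_mem : ∀ X ∈ basicSets, X.Nonempty
  exists_mem : ∀ g : G, ∃ X ∈ basicSets, g ∈ X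
  disj : ∀ X ∈ basicSets, ∀ Y ∈ basicSets, X ≠ Y → Disjoint X Y
  one_mem : ({1} : Finset G) ∈ basicSets
  inv_mem : ∀ X ∈ basicSets, X.image (fun x => x⁻¹) ∈ basicSets
  structConst_eq : ∀ X ∈ basicSets, ∀ Y ∈ basicSets, ∀ Z ∈ basicSets,
    ∀ z ∈ Z, ∀ z' ∈ Z, structConst X Y z = structConst X Y z'

namespace SRing

variable {G G' : Type*} [Group G] [Fintype G] [DecidableEq G]
  [Group G'] [Fintype G'] [DecidableEq G']

/-- An algebraic isomorphism between S-rings: a bijection between the sets of basic sets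
preserving the structure constants. -/
def IsAlgIso (A : SRing G) (B : SRing G') (φ : Finset G → Finset G') : Prop :=
  Set.BijOn φ (A.basicSets : Set (Finset G)) (B.basicSets : Set (Finset G')) ∧
  ∀ X ∈ A.basicSets, ∀ Y ∈ A.basicSets, ∀ Z ∈ A.basicSets,
    ∀ z ∈ Z, ∀ z' ∈ φ Z, structConst X Y z = structConst (φ X) (φ Y) z'

/-- `φ` is induced by the bijection `f : G → G'` if `R(X)^f = R(X^φ)` for every basic set `X`,
where `R(X) = {(g, xg) : x ∈ X, g ∈ G}`; equivalently (for bijective `f`),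
`h * g⁻¹ ∈ X ↔ f h * (f g)⁻¹ ∈ φ X` for all `g h`. -/
def Induces (A : SRing G) (B : SRing G') (φ : Finset G → Finset G') (f : G → G') : Prop :=
  Function.Bijective f ∧
  ∀ X ∈ A.basicSets, ∀ g h : G, h * g⁻¹ ∈ X ↔ f h * (f g)⁻¹ ∈ φ X

/-- Separability with respect to the class of all finite abelian groups. -/
def SeparableA (A : SRing G) : Prop :=
  ∀ (H : Type) [CommGroup H] [Fintype H] [DecidableEq H],
    ∀ (B : SRing H) (φ : Finset G → Finset H),
      A.IsAlgIso B φ → ∃ f : G → H, A.Induces B φ f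

/-- `X` is an `A`-set: a union of basic sets of `A`. -/
def IsASet (A : SRing G) (X : Finset G) : Prop :=
  ∀ Y ∈ A.basicSets, (Y ∩ X).Nonempty → Y ⊆ X

end SRing


namespace SchurAux

open Finset

variable {G : Type} [CommGroup G] [Fintype G] [DecidableEq G] (A : SRing G)

/-- `f` is constant on each basic set of `A`. -/
def ConstOn {R : Type*} (A : SRing G) (f : G → R) : Prop :=
  ∀ Z ∈ A.basicSets, ∀ z ∈ Z, ∀ z' ∈ Z, f z = f z'

lemma basic_eq_of_mem {Y Z : Finset G} (hY : Y ∈ A.basicSets) (hZ : Z ∈ A.basicSets)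
    {g : G} (hgY : g ∈ Y) (hgZ : g ∈ Z) : Y = Z := by
  by_contra h
  exact Finset.disjoint_left.mp (A.disj Y hY Z hZ h) hgY hgZ

/-- The basic set containing `g`. -/
noncomputable def blockOf (g : G) : Finset G := (A.exists_mem g).choose

lemma blockOf_basic (g : G) : blockOf A g ∈ A.basicSets :=
  (A.exists_mem g).choose_spec.1

lemma mem_blockOf (g : G) : g ∈ blockOf A g :=
  (A.exists_mem g).choose_spec.2

lemma blockOf_eq {Y : Finset G} (hY : Y ∈ A.basicSets) {g : G} (hg : g ∈ Y) :
    blockOf A g = Y :=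
  basic_eq_of_mem A (blockOf_basic A g) hY (mem_blockOf A g) hg

lemma structConst_eq_card_filter (X Y : Finset G) (g : G) :
    structConst X Y g = (X.filter (fun x => x⁻¹ * g ∈ Y)).card := by
  unfold structConst
  apply Finset.card_bij' (fun q _ => q.1) (fun x _ => (x, x⁻¹ * g))
  · intro q hq
    simp only [mem_filter, mem_product] at hq ⊢
    refine ⟨hq.1.1, ?_⟩
    rw [← hq.2, inv_mul_cancel_left]
    exact hq.1.2
  · intro x hx
    simp only [mem_filter, mem_product] at hx ⊢
    exact ⟨⟨hx.1, hx.2⟩, mul_inv_cancel_left _ _⟩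
  · intro q hq
    simp only [mem_filter, mem_product] at hq
    ext
    · rfl
    · simp only []
      rw [← hq.2, inv_mul_cancel_left]
  · intro x hx
    rfl

lemma constOn_conv {R : Type*} [AddCommMonoid R] (f : G → R) (hf : ConstOn A f)
    {X : Finset G} (hX : X ∈ A.basicSets) :
    ConstOn A (fun g => ∑ x ∈ X, f (x⁻¹ * g)) := by
  intro Z hZ z hz z' hz'
  have key : ∀ w : G, ∑ x ∈ X, f (x⁻¹ * w)
      = ∑ Y ∈ A.basicSets, ∑ x ∈ X.filter (fun x => blockOf A (x⁻¹ * w) = Y), f (x⁻¹ * w) :=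
    fun w => (Finset.sum_fiberwise_of_maps_to (fun x _ => blockOf_basic A (x⁻¹ * w)) _).symm
  simp only []
  rw [key z, key z']
  apply Finset.sum_congr rfl
  intro Y hY
  obtain ⟨y0, hy0⟩ := A.nonempty_mem Y hY
  have hcardeq : ∀ w : G, (X.filter (fun x => blockOf A (x⁻¹ * w) = Y)).card
      = structConst X Y w := by
    intro w
    rw [structConst_eq_card_filter]
    congr 1
    apply Finset.filter_congr
    intro x _
    constructor
    · intro h
      exact h ▸ mem_blockOf A _
    · intro h
      exact blockOf_eq A hY h
  have hval : ∀ w : G, ∑ x ∈ X.filter (fun x => blockOf A (x⁻¹ * w) = Y), f (x⁻¹ * w)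
      = (structConst X Y w) • f y0 := by
    intro w
    rw [← hcardeq w, ← Finset.sum_const]
    apply Finset.sum_congr rfl
    intro x hx
    rw [mem_filter] at hx
    exact hf Y hY _ (hx.2 ▸ mem_blockOf A _) y0 hy0
  rw [hval z, hval z', A.structConst_eq X hX Y hY Z hZ z hz z' hz']

lemma constOn_indicator {R : Type*} [Zero R] [One R] {X : Finset G} (hX : X ∈ A.basicSets) :
    ConstOn A (fun g => if g ∈ X then (1 : R) else 0) := by
  intro Z hZ z hz z' hz'
  rcases eq_or_ne Z X with rfl | h
  · simp [hz, hz']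
  · have d := A.disj Z hZ X hX h
    have hz1 : z ∉ X := fun hzX => Finset.disjoint_left.mp d hz hzX
    have hz2 : z' ∉ X := fun hzX => Finset.disjoint_left.mp d hz' hzX
    simp [hz1, hz2]

/-- The characteristic sum of `X` in the monoid algebra over `ZMod p`. -/
noncomputable def chSum (X : Finset G) (p : ℕ) : MonoidAlgebra (ZMod p) G :=
  ∑ x ∈ X, MonoidAlgebra.single x 1

lemma chSum_mul_apply (X : Finset G) (p : ℕ) (b : MonoidAlgebra (ZMod p) G) (g : G) :
    (chSum X p * b).coeff g = ∑ x ∈ X, b.coeff (x⁻¹ * g) := by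
  rw [chSum, Finset.sum_mul, MonoidAlgebra.coeff_sum, Finsupp.finset_sum_apply]
  apply Finset.sum_congr rfl
  intro x _
  rw [MonoidAlgebra.single_mul_apply, one_mul]

lemma constOn_pow_coeff (p : ℕ) {X : Finset G} (hX : X ∈ A.basicSets) (k : ℕ) :
    ConstOn A (fun g => ((chSum X p) ^ k).coeff g) := by
  induction k with
  | zero =>
    have h1 : (fun g : G => ((chSum X p) ^ 0).coeff g)
        = (fun g : G => if g ∈ ({1} : Finset G) then (1 : ZMod p) else 0) := by
      funext g
      rw [pow_zero, MonoidAlgebra.one_def, MonoidAlgebra.coeff_single, Finsupp.single_apply]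
      simp [eq_comm]
    rw [h1]
    exact constOn_indicator A A.one_mem
  | succ k ih =>
    have h2 : (fun g : G => ((chSum X p) ^ (k + 1)).coeff g)
        = (fun g : G => ∑ x ∈ X, ((chSum X p) ^ k).coeff (x⁻¹ * g)) := by
      funext g
      rw [pow_succ, mul_comm, chSum_mul_apply]
    rw [h2]
    exact constOn_conv A _ ih hX

lemma charP_monoidAlgebra (p : ℕ) [NeZero p] : CharP (MonoidAlgebra (ZMod p) G) p := by
  constructor
  intro n
  rw [MonoidAlgebra.natCast_def, MonoidAlgebra.single_eq_zero]
  exact (ZMod.natCast_eq_zero_iff n p)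

lemma pow_injective_of_coprime {k : ℕ} (hk : Nat.Coprime k (Fintype.card G)) :
    Function.Injective (fun x : G => x ^ k) := by
  have h' : (Nat.card G).Coprime k := by
    rw [Nat.card_eq_fintype_card]
    exact hk.symm
  exact fun a b hab => (powCoprime h').injective hab

lemma chSum_pow_indicator (p : ℕ) [Fact p.Prime] (hp : Nat.Coprime p (Fintype.card G))
    (X : Finset G) (g : G) :
    ((chSum X p) ^ p).coeff g = if g ∈ X.image (fun x => x ^ p) then (1 : ZMod p) else 0 := by
  haveI : CharP (MonoidAlgebra (ZMod p) G) p := charP_monoidAlgebra p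
  have hfr : (chSum X p) ^ p = ∑ x ∈ X, MonoidAlgebra.single (x ^ p) (1 : ZMod p) := by
    rw [chSum, sum_pow_char]
    apply Finset.sum_congr rfl
    intro x _
    rw [MonoidAlgebra.single_pow, one_pow]
  have himg : (chSum X p) ^ p = ∑ y ∈ X.image (fun x => x ^ p), MonoidAlgebra.single y (1 : ZMod p) := by
    rw [hfr, Finset.sum_image (fun x _ y _ h => pow_injective_of_coprime hp h)]
  rw [himg, MonoidAlgebra.coeff_sum, Finsupp.finset_sum_apply]
  rw [Finset.sum_congr rfl (fun y _ => MonoidAlgebra.coeff_single_apply (a := y) (b := (1 : ZMod p)) (a' := g))]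
  exact Finset.sum_ite_eq' _ g (fun _ => (1 : ZMod p))

lemma isASet_of_basic {X : Finset G} (hX : X ∈ A.basicSets) : A.IsASet X := by
  intro Y hY hne
  obtain ⟨g, hg⟩ := hne
  rw [mem_inter] at hg
  rw [basic_eq_of_mem A hY hX hg.1 hg.2]

lemma isASet_image_pow_prime_of_basic (p : ℕ) [Fact p.Prime]
    (hp : Nat.Coprime p (Fintype.card G)) {X : Finset G} (hX : X ∈ A.basicSets) :
    A.IsASet (X.image (fun x => x ^ p)) := by
  have hconst : ConstOn A (fun g => if g ∈ X.image (fun x => x ^ p) then (1 : ZMod p) else 0) := by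
    have h := constOn_pow_coeff A p hX p
    have he : (fun g : G => ((chSum X p) ^ p).coeff g)
        = (fun g => if g ∈ X.image (fun x => x ^ p) then (1 : ZMod p) else 0) :=
      funext (chSum_pow_indicator p hp X)
    rwa [he] at h
  intro Y hY hne
  obtain ⟨g, hg⟩ := hne
  rw [mem_inter] at hg
  intro y hy
  have h := hconst Y hY y hy g hg.1
  beta_reduce at h
  rw [if_pos hg.2] at h
  by_contra hmem
  rw [if_neg hmem] at h
  exact (zero_ne_one (α := ZMod p)) h

lemma isASet_image_pow_prime (p : ℕ) [Fact p.Prime]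
    (hp : Nat.Coprime p (Fintype.card G)) {S : Finset G} (hS : A.IsASet S) :
    A.IsASet (S.image (fun x => x ^ p)) := by
  intro Y hY hne
  obtain ⟨g, hg⟩ := hne
  rw [mem_inter] at hg
  obtain ⟨s, hsS, hsg⟩ := Finset.mem_image.mp hg.2
  have hW : blockOf A s ∈ A.basicSets := blockOf_basic A s
  have hWS : blockOf A s ⊆ S :=
    hS _ hW ⟨s, mem_inter.mpr ⟨mem_blockOf A s, hsS⟩⟩
  have h2 := isASet_image_pow_prime_of_basic A p hp hW
  have hgW : g ∈ (blockOf A s).image (fun x => x ^ p) :=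
    mem_image.mpr ⟨s, mem_blockOf A s, hsg⟩
  have hYsub : Y ⊆ (blockOf A s).image (fun x => x ^ p) :=
    h2 Y hY ⟨g, mem_inter.mpr ⟨hg.1, hgW⟩⟩
  exact hYsub.trans (Finset.image_subset_image hWS)

lemma isASet_image_pow : ∀ (m : ℕ), Nat.Coprime m (Fintype.card G) →
    ∀ S : Finset G, A.IsASet S → A.IsASet (S.image (fun x => x ^ m)) := by
  intro m
  induction m using Nat.recOnMul with
  | zero =>
    intro hm S _ Y hY hne y hy
    have hcard : Fintype.card G = 1 := Nat.coprime_zero_left _ |>.mp hm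
    haveI : Subsingleton G := Fintype.card_le_one_iff_subsingleton.mp hcard.le
    obtain ⟨g, hg⟩ := hne
    rw [mem_inter] at hg
    rw [Subsingleton.elim y g]
    exact hg.2
  | one =>
    intro _ S hS
    have : S.image (fun x => x ^ 1) = S := by simp
    rwa [this]
  | prime q hq =>
    intro hm S hS
    haveI : Fact q.Prime := ⟨hq⟩
    exact isASet_image_pow_prime A q hm hS
  | mul a b ha hb =>
    intro hm S hS
    have hma : Nat.Coprime a (Fintype.card G) :=
      Nat.Coprime.coprime_dvd_left (dvd_mul_right a b) hm
    have hmb : Nat.Coprime b (Fintype.card G) :=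
      Nat.Coprime.coprime_dvd_left (dvd_mul_left b a) hm
    have h := hb hmb _ (ha hma S hS)
    have he : (S.image (fun x => x ^ a)).image (fun x => x ^ b)
        = S.image (fun x => x ^ (a * b)) := by
      rw [Finset.image_image]
      apply Finset.image_congr
      intro x _
      simp [Function.comp, pow_mul]
    rwa [he] at h

end SchurAux

/-- Schur's theorem on multipliers: for an S-ring over a finite abelian group `G`,
a basic set `X`, and `m` coprime to `|G|`, the set `X^(m) = {x^m : x ∈ X}` is again
a basic set. -/
theorem stmt5 (G : Type) [CommGroup G] [Fintype G] [DecidableEq G] (A : SRing G)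
    (X : Finset G) (hX : X ∈ A.basicSets) (m : ℤ)
    (hm : IsCoprime m (Fintype.card G : ℤ)) :
    X.image (fun x => x ^ m) ∈ A.basicSets := by
  classical
  by_cases h1 : Fintype.card G = 1
  · haveI : Subsingleton G := Fintype.card_le_one_iff_subsingleton.mp h1.le
    obtain ⟨x0, hx0⟩ := A.nonempty_mem X hX
    have himg : X.image (fun x => x ^ m) = X := by
      ext a
      simp only [Finset.mem_image]
      constructor
      · rintro ⟨x, hx, rfl⟩
        rw [Subsingleton.elim (x ^ m) x0]
        rwa [Subsingleton.elim x0 x]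
      · intro ha
        exact ⟨a, ha, Subsingleton.elim _ _⟩
    rwa [himg]
  · have hpos : 0 < Fintype.card G := Fintype.card_pos
    have hn1 : 1 < Fintype.card G := by omega
    have hnz : (Fintype.card G : ℤ) ≠ 0 := by exact_mod_cast hpos.ne'
    set k : ℕ := (m % (Fintype.card G : ℤ)).toNat with hkdef
    have hk0 : ((k : ℤ)) = m % (Fintype.card G : ℤ) :=
      Int.toNat_of_nonneg (Int.emod_nonneg m hnz)
    have hxk : ∀ x : G, x ^ m = x ^ k := by
      intro x
      have h := zpow_mod_natCard x m
      rw [Nat.card_eq_fintype_card] at h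
      rw [← h, ← hk0, zpow_natCast]
    have hgcd : Int.gcd m (Fintype.card G : ℤ) = 1 := Int.isCoprime_iff_gcd_eq_one.mp hm
    have hkcop : Nat.Coprime k (Fintype.card G) := by
      have hdm : ((Nat.gcd k (Fintype.card G) : ℕ) : ℤ) ∣ m := by
        have h2 : ((Nat.gcd k (Fintype.card G) : ℕ) : ℤ) ∣ (k : ℤ) :=
          Int.natCast_dvd_natCast.mpr (Nat.gcd_dvd_left _ _)
        have h3 : ((Nat.gcd k (Fintype.card G) : ℕ) : ℤ) ∣ ((Fintype.card G : ℕ) : ℤ) :=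
          Int.natCast_dvd_natCast.mpr (Nat.gcd_dvd_right _ _)
        have h4 : m = (k : ℤ) + (Fintype.card G : ℤ) * (m / (Fintype.card G : ℤ)) := by
          rw [hk0]
          exact (Int.emod_add_mul_ediv m (Fintype.card G : ℤ)).symm
        rw [h4]
        exact dvd_add h2 (h3.mul_right _)
      have hdn : ((Nat.gcd k (Fintype.card G) : ℕ) : ℤ) ∣ ((Fintype.card G : ℕ) : ℤ) :=
        Int.natCast_dvd_natCast.mpr (Nat.gcd_dvd_right _ _)
      have := Int.dvd_gcd hdm hdn
      rw [hgcd] at this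
      exact Nat.dvd_one.mp (Int.ofNat_dvd.mp (by exact_mod_cast this))
    haveI : NeZero (Fintype.card G) := ⟨hpos.ne'⟩
    set u : (ZMod (Fintype.card G))ˣ := ZMod.unitOfCoprime k hkcop with hu
    set k' : ℕ := ((u⁻¹ : (ZMod (Fintype.card G))ˣ) : ZMod (Fintype.card G)).val with hk'
    have hmodeq : k * k' ≡ 1 [MOD Fintype.card G] := by
      rw [← ZMod.natCast_eq_natCast_iff]
      push_cast
      rw [ZMod.natCast_val, ZMod.cast_id]
      rw [show ((k : ZMod (Fintype.card G))) = (u : ZMod (Fintype.card G)) from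
        (ZMod.coe_unitOfCoprime k hkcop).symm]
      rw [← Units.val_mul, mul_inv_cancel, Units.val_one]
    have hq : k * k' = Fintype.card G * (k * k' / Fintype.card G) + 1 := by
      have h5 : k * k' % Fintype.card G = 1 := by
        have := hmodeq
        unfold Nat.ModEq at this
        rwa [Nat.mod_eq_of_lt hn1] at this
      conv_lhs => rw [← Nat.div_add_mod (k * k') (Fintype.card G)]
      rw [h5]
    have hxc : ∀ x : G, (x ^ k) ^ k' = x := by
      intro x
      rw [← pow_mul, hq, pow_add, pow_mul, pow_card_eq_one, one_pow, one_mul, pow_one]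
    have hk'cop : Nat.Coprime k' (Fintype.card G) := by
      have hcc : Nat.Coprime (k * k') (Fintype.card G) := by
        rw [hq, add_comm]
        exact (Nat.coprime_add_mul_left_left 1 (Fintype.card G) _).mpr
          (Nat.coprime_one_left _)
      exact Nat.Coprime.coprime_dvd_left (dvd_mul_left k' k) hcc
    have himg : X.image (fun x => x ^ m) = X.image (fun x => x ^ k) :=
      Finset.image_congr (fun x _ => hxk x)
    rw [himg]
    obtain ⟨x, hxX⟩ := A.nonempty_mem X hX
    have hS := SchurAux.isASet_image_pow A k hkcop X (SchurAux.isASet_of_basic A hX)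
    obtain ⟨Z, hZ, hxZ⟩ := A.exists_mem (x ^ k)
    have hZsub : Z ⊆ X.image (fun x => x ^ k) :=
      hS Z hZ ⟨x ^ k, Finset.mem_inter.mpr ⟨hxZ, Finset.mem_image_of_mem _ hxX⟩⟩
    have hZ' := SchurAux.isASet_image_pow A k' hk'cop Z (SchurAux.isASet_of_basic A hZ)
    have hxmem : x ∈ Z.image (fun z => z ^ k') :=
      Finset.mem_image.mpr ⟨x ^ k, hxZ, hxc x⟩
    have hXsub : X ⊆ Z.image (fun z => z ^ k') :=
      hZ' X hX ⟨x, Finset.mem_inter.mpr ⟨hxX, hxmem⟩⟩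
    have hsub2 : X.image (fun x => x ^ k) ⊆ Z := by
      intro g hg
      obtain ⟨x1, hx1, rfl⟩ := Finset.mem_image.mp hg
      obtain ⟨z, hz, rfl⟩ := Finset.mem_image.mp (hXsub hx1)
      have : ((z ^ k') ^ k : G) = z := by
        rw [← pow_mul, mul_comm, pow_mul, hxc z]
      rw [this]
      exact hz
    have hfin : X.image (fun x => x ^ k) = Z := subset_antisymm hsub2 hZsub
    rw [hfin]
    exact hZ
end

section
/- Let 𝒜 and 𝒜' be S-rings over finite groups G and G', let ξ ∈ ℤG and ξ' ∈ ℤG', let ℬ be the smallest S-ring over G containing 𝒜 and ξ, and ℬ' the smallest S-ring over G' containing 𝒜' and ξ'. Then for every algebraic isomorphism φ : 𝒜 → 𝒜' there is at most one algebraic isomorphism ψ : ℬ → ℬ' such that ψ extends φ (i.e. the ℤ-linear ring isomorphism ℬ → ℬ' determined by ψ via X̲ ↦ (X^ψ)̲ agrees on 𝒜 with the one determined by φ) and the linear extension of ψ maps ξ to ξ'. -/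
open scoped Pointwise

namespace SRing

variable {G G' : Type*} [Group G] [Fintype G] [DecidableEq G]
  [Group G'] [Fintype G'] [DecidableEq G']

/-- `A ⊆ B` as rings: every basic set of `A` is a union of basic sets of `B`. -/
def SubringOf (A B : SRing G) : Prop := ∀ X ∈ A.basicSets, B.IsASet X

/-- The element of `ℤG` with coefficient function `ξ` belongs to the S-ring `B`,
i.e. `ξ` is constant on every basic set of `B`. -/
def MemFun (B : SRing G) (ξ : G → ℤ) : Prop :=
  ∀ Y ∈ B.basicSets, ∀ y ∈ Y, ∀ y' ∈ Y, ξ y = ξ y'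

/-- `ψ` (defined on the basic sets of `B ⊇ A`) extends `φ` (defined on the basic sets of `A`):
the induced linear ring isomorphisms agree on `A`, i.e. for every basic set `X` of `A`,
`φ X` is the (disjoint) union of the sets `ψ Y` over the basic sets `Y ⊆ X` of `B`. -/
def ExtendsOn (A B : SRing G) (φ ψ : Finset G → Finset G') : Prop :=
  ∀ X ∈ A.basicSets, φ X = (B.basicSets.filter (fun Y => Y ⊆ X)).biUnion ψ

/-- The linear extension of `ψ` maps the element with coefficient function `ξ` to the one
with coefficient function `ξ'`. -/
def MapsElem (B : SRing G) (ψ : Finset G → Finset G') (ξ : G → ℤ) (ξ' : G' → ℤ) : Prop :=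
  ∀ Y ∈ B.basicSets, ∀ y ∈ Y, ∀ y' ∈ ψ Y, ξ y = ξ' y'

end SRing

namespace Stmt7Proof

open Finset

variable {G G' : Type*} [Group G] [Fintype G] [DecidableEq G]
  [Group G'] [Fintype G'] [DecidableEq G']

lemma structConst_pos {X Y : Finset G} {z : G} :
    0 < structConst X Y z ↔ ∃ x ∈ X, ∃ y ∈ Y, x * y = z := by
  unfold structConst
  rw [Finset.card_pos, Finset.filter_nonempty_iff]
  constructor
  · rintro ⟨⟨a, b⟩, hab, h⟩
    rw [Finset.mem_product] at hab
    exact ⟨a, hab.1, b, hab.2, h⟩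
  · rintro ⟨a, ha, b, hb, h⟩
    exact ⟨(a, b), Finset.mem_product.mpr ⟨ha, hb⟩, h⟩

lemma structConst_biUnion_left (s : Finset (Finset G)) (Y : Finset G) (z : G)
    (hd : ∀ a ∈ s, ∀ b ∈ s, a ≠ b → Disjoint a b) :
    structConst (s.biUnion id) Y z = ∑ X ∈ s, structConst X Y z := by
  unfold structConst
  have h1 : ((s.biUnion id) ×ˢ Y).filter (fun q => q.1 * q.2 = z)
      = s.biUnion (fun X => (X ×ˢ Y).filter (fun q => q.1 * q.2 = z)) := by
    ext ⟨a, b⟩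
    simp only [Finset.mem_filter, Finset.mem_product, Finset.mem_biUnion, id]
    tauto
  rw [h1]
  apply Finset.card_biUnion
  intro a ha b hb hne
  simp only [Function.onFun, Finset.disjoint_left]
  rintro ⟨x, y⟩ hx hy
  simp only [Finset.mem_filter, Finset.mem_product] at hx hy
  exact (Finset.disjoint_left.mp (hd a ha b hb hne) hx.1.1) hy.1.1

lemma structConst_biUnion_right (X : Finset G) (s : Finset (Finset G)) (z : G)
    (hd : ∀ a ∈ s, ∀ b ∈ s, a ≠ b → Disjoint a b) :
    structConst X (s.biUnion id) z = ∑ Y ∈ s, structConst X Y z := by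
  unfold structConst
  have h1 : (X ×ˢ (s.biUnion id)).filter (fun q => q.1 * q.2 = z)
      = s.biUnion (fun Y => (X ×ˢ Y).filter (fun q => q.1 * q.2 = z)) := by
    ext ⟨a, b⟩
    simp only [Finset.mem_filter, Finset.mem_product, Finset.mem_biUnion, id]
    tauto
  rw [h1]
  apply Finset.card_biUnion
  intro a ha b hb hne
  simp only [Function.onFun, Finset.disjoint_left]
  rintro ⟨x, y⟩ hx hy
  simp only [Finset.mem_filter, Finset.mem_product] at hx hy
  exact (Finset.disjoint_left.mp (hd a ha b hb hne) hx.1.2) hy.1.2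

lemma eqvGen_elim {α : Type*} {r : α → α → Prop} {bs : α → Prop} {Q : α → α → Prop}
    (hmem : ∀ a b, r a b → bs a ∧ bs b)
    (hrefl : ∀ a, bs a → Q a a)
    (hsymm : ∀ a b, Q a b → Q b a)
    (htrans : ∀ a b c, bs b → Q a b → Q b c → Q a c)
    (hstep : ∀ a b, r a b → Q a b) :
    ∀ a b, Relation.EqvGen r a b → a = b ∨ (bs a ∧ bs b ∧ Q a b) := by
  intro a b h
  induction h with
  | rel a b h => exact Or.inr ⟨(hmem a b h).1, (hmem a b h).2, hstep a b h⟩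
  | refl a => exact Or.inl rfl
  | symm a b h ih =>
      rcases ih with rfl | ⟨ha, hb, hq⟩
      · exact Or.inl rfl
      · exact Or.inr ⟨hb, ha, hsymm a b hq⟩
  | trans a b c hab hbc ih1 ih2 =>
      rcases ih1 with rfl | ⟨ha, hb, h1⟩
      · exact ih2
      · rcases ih2 with rfl | ⟨_, hc, h2⟩
        · exact Or.inr ⟨ha, hb, h1⟩
        · exact Or.inr ⟨ha, hc, htrans a b c hb h1 h2⟩

lemma eqvGen_map {α : Type*} {r : α → α → Prop} {g : α → α}
    (hg : ∀ a b, r a b → r (g a) (g b)) :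
    ∀ a b, Relation.EqvGen r a b → Relation.EqvGen r (g a) (g b) := by
  intro a b h
  induction h with
  | rel a b h => exact Relation.EqvGen.rel _ _ (hg a b h)
  | refl a => exact Relation.EqvGen.refl _
  | symm a b h ih => exact Relation.EqvGen.symm _ _ ih
  | trans a b c h1 h2 ih1 ih2 => exact Relation.EqvGen.trans _ _ _ ih1 ih2

lemma basic_eq {B : SRing G} {X Y : Finset G} (hX : X ∈ B.basicSets) (hY : Y ∈ B.basicSets)
    {g : G} (hgX : g ∈ X) (hgY : g ∈ Y) : X = Y := by
  by_contra h
  exact (Finset.disjoint_left.mp (B.disj X hX Y hY h) hgX) hgY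

lemma mapsTo' {B : SRing G} {B' : SRing G'} {ψ : Finset G → Finset G'}
    (h : B.IsAlgIso B' ψ) {X : Finset G} (hX : X ∈ B.basicSets) : ψ X ∈ B'.basicSets :=
  Finset.mem_coe.mp (h.1.1 (Finset.mem_coe.mpr hX))

lemma injOn' {B : SRing G} {B' : SRing G'} {ψ : Finset G → Finset G'}
    (h : B.IsAlgIso B' ψ) {X Y : Finset G} (hX : X ∈ B.basicSets) (hY : Y ∈ B.basicSets)
    (heq : ψ X = ψ Y) : X = Y :=
  h.1.2.1 (Finset.mem_coe.mpr hX) (Finset.mem_coe.mpr hY) heq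

lemma algIso_one {B : SRing G} {B' : SRing G'} {ψ : Finset G → Finset G'}
    (h : B.IsAlgIso B' ψ) : ψ ({1} : Finset G) = {1} := by
  have hE' : ψ ({1} : Finset G) ∈ B'.basicSets := mapsTo' h B.one_mem
  obtain ⟨x, hx⟩ := B'.nonempty_mem _ hE'
  obtain ⟨Y, hY, hψY⟩ : ∃ Y ∈ B.basicSets, ψ Y = ({1} : Finset G') := by
    obtain ⟨Y, hY, hψY⟩ := h.1.2.2 (Finset.mem_coe.mpr B'.one_mem)
    exact ⟨Y, Finset.mem_coe.mp hY, hψY⟩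
  obtain ⟨Z', hZ', hxZ'⟩ := B'.exists_mem x
  obtain ⟨Z, hZ, rfl⟩ : ∃ Z ∈ B.basicSets, ψ Z = Z' := by
    obtain ⟨Z, hZ, hZeq⟩ := h.1.2.2 (Finset.mem_coe.mpr hZ')
    exact ⟨Z, Finset.mem_coe.mp hZ, hZeq⟩
  obtain ⟨zz, hzz⟩ := B.nonempty_mem Z hZ
  have key : structConst ({1} : Finset G) Y zz = structConst (ψ {1}) (ψ Y) x :=
    h.2 _ B.one_mem _ hY _ hZ _ hzz _ hxZ'
  have hpos : 0 < structConst (ψ ({1} : Finset G)) (ψ Y) x :=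
    structConst_pos.mpr ⟨x, hx, 1, by rw [hψY]; exact Finset.mem_singleton_self 1, mul_one x⟩
  rw [← key] at hpos
  obtain ⟨a, ha, b, hb, hab⟩ := structConst_pos.mp hpos
  rw [Finset.mem_singleton] at ha
  subst ha
  rw [one_mul] at hab
  subst hab
  have hZY : Z = Y := basic_eq hZ hY hzz hb
  subst hZY
  rw [hψY, Finset.mem_singleton] at hxZ'
  subst hxZ'
  exact basic_eq hE' B'.one_mem hx (Finset.mem_singleton_self 1)

lemma algIso_inv {B : SRing G} {B' : SRing G'} {ψ : Finset G → Finset G'}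
    (h : B.IsAlgIso B' ψ) {X : Finset G} (hX : X ∈ B.basicSets) :
    ψ (X.image (fun x => x⁻¹)) = (ψ X).image (fun x => x⁻¹) := by
  have hXi : X.image (fun x => x⁻¹) ∈ B.basicSets := B.inv_mem X hX
  obtain ⟨x, hx⟩ := B.nonempty_mem X hX
  have key : structConst X (X.image (fun x => x⁻¹)) 1
      = structConst (ψ X) (ψ (X.image (fun x => x⁻¹))) 1 :=
    h.2 _ hX _ hXi _ B.one_mem _ (Finset.mem_singleton_self 1) _
      (by rw [algIso_one h]; exact Finset.mem_singleton_self 1)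
  have hpos : 0 < structConst X (X.image (fun x => x⁻¹)) 1 :=
    structConst_pos.mpr ⟨x, hx, x⁻¹, Finset.mem_image_of_mem _ hx, mul_inv_cancel x⟩
  rw [key] at hpos
  obtain ⟨a, ha, b, hb, hab⟩ := structConst_pos.mp hpos
  have hb' : b = a⁻¹ := (inv_eq_of_mul_eq_one_right hab).symm
  subst hb'
  exact basic_eq (mapsTo' h hXi) (B'.inv_mem _ (mapsTo' h hX)) hb
    (Finset.mem_image_of_mem _ ha)

lemma subset_iff_ext {A B : SRing G} {B' : SRing G'} {φ ψ : Finset G → Finset G'}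
    (hψ : B.IsAlgIso B' ψ) (hext : SRing.ExtendsOn A B φ ψ)
    {X : Finset G} (hX : X ∈ A.basicSets) {Y : Finset G} (hY : Y ∈ B.basicSets) :
    Y ⊆ X ↔ ψ Y ⊆ φ X := by
  constructor
  · intro hs
    rw [hext X hX]
    exact Finset.subset_biUnion_of_mem ψ (Finset.mem_filter.mpr ⟨hY, hs⟩)
  · intro hs
    obtain ⟨w, hw⟩ := B'.nonempty_mem _ (mapsTo' hψ hY)
    have hw' := hs hw
    rw [hext X hX, Finset.mem_biUnion] at hw'
    obtain ⟨Y', hY', hwY'⟩ := hw'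
    rw [Finset.mem_filter] at hY'
    have heq : ψ Y = ψ Y' := basic_eq (mapsTo' hψ hY) (mapsTo' hψ hY'.1) hw hwY'
    have hYY' : Y = Y' := injOn' hψ hY hY'.1 heq
    rw [hYY']
    exact hY'.2

abbrev rel12 (B : SRing G) (ψ₁ ψ₂ : Finset G → Finset G') (U V : Finset G) : Prop :=
  U ∈ B.basicSets ∧ V ∈ B.basicSets ∧ ψ₁ U = ψ₂ V

open Classical in
noncomputable def cls12 (B : SRing G) (ψ₁ ψ₂ : Finset G → Finset G') (Y : Finset G) :
    Finset (Finset G) :=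
  B.basicSets.filter (fun Z => Relation.EqvGen (rel12 B ψ₁ ψ₂) Y Z)

noncomputable def blk12 (B : SRing G) (ψ₁ ψ₂ : Finset G → Finset G') (Y : Finset G) :
    Finset G :=
  (cls12 B ψ₁ ψ₂ Y).biUnion id

lemma mem_cls12 {B : SRing G} {ψ₁ ψ₂ : Finset G → Finset G'} {Y U : Finset G} :
    U ∈ cls12 B ψ₁ ψ₂ Y ↔ U ∈ B.basicSets ∧ Relation.EqvGen (rel12 B ψ₁ ψ₂) Y U := by
  simp [cls12, Finset.mem_filter]

lemma mem_blk12 {B : SRing G} {ψ₁ ψ₂ : Finset G → Finset G'} {Y : Finset G} {g : G} :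
    g ∈ blk12 B ψ₁ ψ₂ Y ↔ ∃ U, U ∈ cls12 B ψ₁ ψ₂ Y ∧ g ∈ U := by
  simp [blk12, Finset.mem_biUnion]

end Stmt7Proof
/-- Given S-rings `A ⊆ B` over `G` and `A' ⊆ B'` over `G'`, where `B` is the smallest S-ring
containing `A` and `ξ ∈ ℤG` and `B'` is the smallest S-ring containing `A'` and `ξ' ∈ ℤG'`,
an algebraic isomorphism `φ : A → A'` admits at most one extension to an algebraic
isomorphism `ψ : B → B'` with `ξ^ψ = ξ'`. -/
theorem stmt7 (G G' : Type) [Group G] [Fintype G] [DecidableEq G]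
    [Group G'] [Fintype G'] [DecidableEq G']
    (A B : SRing G) (A' B' : SRing G') (ξ : G → ℤ) (ξ' : G' → ℤ)
    (hB : A.SubringOf B ∧ B.MemFun ξ ∧
      ∀ C : SRing G, A.SubringOf C → C.MemFun ξ → B.SubringOf C)
    (hB' : A'.SubringOf B' ∧ B'.MemFun ξ' ∧
      ∀ C : SRing G', A'.SubringOf C → C.MemFun ξ' → B'.SubringOf C)
    (φ : Finset G → Finset G') (hφ : A.IsAlgIso A' φ)
    (ψ₁ ψ₂ : Finset G → Finset G')
    (h₁ : B.IsAlgIso B' ψ₁ ∧ SRing.ExtendsOn A B φ ψ₁ ∧ B.MapsElem ψ₁ ξ ξ')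
    (h₂ : B.IsAlgIso B' ψ₂ ∧ SRing.ExtendsOn A B φ ψ₂ ∧ B.MapsElem ψ₂ ξ ξ') :
    ∀ Y ∈ B.basicSets, ψ₁ Y = ψ₂ Y := by
  classical
  open Stmt7Proof in
  obtain ⟨hAB, hBξ, hBmin⟩ := hB
  obtain ⟨h₁iso, h₁ext, h₁map⟩ := h₁
  obtain ⟨h₂iso, h₂ext, h₂map⟩ := h₂
  -- the "difference" map σ with ψ₂ (σ X) = ψ₁ X
  have hsig : ∀ X : Finset G, ∃ Z : Finset G,
      X ∈ B.basicSets → Z ∈ B.basicSets ∧ ψ₂ Z = ψ₁ X := by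
    intro X
    by_cases hX : X ∈ B.basicSets
    · obtain ⟨Z, hZ, hZeq⟩ := h₂iso.1.2.2 (Finset.mem_coe.mpr (mapsTo' h₁iso hX))
      exact ⟨Z, fun _ => ⟨Finset.mem_coe.mp hZ, hZeq⟩⟩
    · exact ⟨X, fun h => absurd h hX⟩
  choose σ hσ using hsig
  have hrσ : ∀ U, U ∈ B.basicSets → rel12 B ψ₁ ψ₂ U (σ U) := fun U hU =>
    ⟨hU, (hσ U hU).1, ((hσ U hU).2).symm⟩
  have hmem : ∀ a b, rel12 B ψ₁ ψ₂ a b → a ∈ B.basicSets ∧ b ∈ B.basicSets :=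
    fun a b h => ⟨h.1, h.2.1⟩
  have hclseq : ∀ Y Z, Relation.EqvGen (rel12 B ψ₁ ψ₂) Y Z →
      cls12 B ψ₁ ψ₂ Y = cls12 B ψ₁ ψ₂ Z := by
    intro Y Z h
    ext U
    rw [mem_cls12, mem_cls12]
    constructor
    · rintro ⟨hU, hE'⟩
      exact ⟨hU, Relation.EqvGen.trans _ _ _ (Relation.EqvGen.symm _ _ h) hE'⟩
    · rintro ⟨hU, hE'⟩
      exact ⟨hU, Relation.EqvGen.trans _ _ _ h hE'⟩
  have hselfcls : ∀ Y, Y ∈ B.basicSets → Y ∈ cls12 B ψ₁ ψ₂ Y :=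
    fun Y hY => mem_cls12.mpr ⟨hY, Relation.EqvGen.refl Y⟩
  have hsubblk : ∀ Y U, U ∈ cls12 B ψ₁ ψ₂ Y → U ⊆ blk12 B ψ₁ ψ₂ Y :=
    fun Y U hU => Finset.subset_biUnion_of_mem id hU
  have hclsdisj : ∀ Y, ∀ a ∈ cls12 B ψ₁ ψ₂ Y, ∀ b ∈ cls12 B ψ₁ ψ₂ Y, a ≠ b → Disjoint a b :=
    fun Y a ha b hb hne => B.disj a (mem_cls12.mp ha).1 b (mem_cls12.mp hb).1 hne
  -- expansion of structConst on blocks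
  have hF : ∀ X0 Y0 w, structConst (blk12 B ψ₁ ψ₂ X0) (blk12 B ψ₁ ψ₂ Y0) w
      = ∑ Xi ∈ cls12 B ψ₁ ψ₂ X0, ∑ Yj ∈ cls12 B ψ₁ ψ₂ Y0, structConst Xi Yj w := by
    intro X0 Y0 w
    show structConst ((cls12 B ψ₁ ψ₂ X0).biUnion id) ((cls12 B ψ₁ ψ₂ Y0).biUnion id) w = _
    rw [structConst_biUnion_left _ _ _ (hclsdisj X0)]
    exact Finset.sum_congr rfl (fun Xi _ => structConst_biUnion_right _ _ _ (hclsdisj Y0))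
  have hσinj : ∀ U V, U ∈ B.basicSets → V ∈ B.basicSets → σ U = σ V → U = V := by
    intro U V hU hV h
    apply injOn' h₁iso hU hV
    rw [← (hσ U hU).2, ← (hσ V hV).2, h]
  have hσcls : ∀ X0, ∀ U ∈ cls12 B ψ₁ ψ₂ X0, σ U ∈ cls12 B ψ₁ ψ₂ X0 := by
    intro X0 U hU
    obtain ⟨hUb, hEU⟩ := mem_cls12.mp hU
    exact mem_cls12.mpr ⟨(hσ U hUb).1,
      Relation.EqvGen.trans _ _ _ hEU (Relation.EqvGen.rel _ _ (hrσ U hUb))⟩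
  have hσimg : ∀ X0, (cls12 B ψ₁ ψ₂ X0).image σ = cls12 B ψ₁ ψ₂ X0 := by
    intro X0
    apply Finset.eq_of_subset_of_card_le
    · intro V hV
      obtain ⟨U, hU, rfl⟩ := Finset.mem_image.mp hV
      exact hσcls X0 U hU
    · have hinj : Set.InjOn σ (cls12 B ψ₁ ψ₂ X0 : Set (Finset G)) := by
        intro a ha b hb h
        exact hσinj a b (mem_cls12.mp (Finset.mem_coe.mp ha)).1
          (mem_cls12.mp (Finset.mem_coe.mp hb)).1 h
      rw [Finset.card_image_of_injOn hinj]
  have hreidx : ∀ (W : Finset G) (h : Finset G → ℕ),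
      ∑ U ∈ cls12 B ψ₁ ψ₂ W, h (σ U) = ∑ U ∈ cls12 B ψ₁ ψ₂ W, h U := by
    intro W h
    conv_rhs => rw [← hσimg W]
    rw [Finset.sum_image (fun a ha b hb hab =>
      hσinj a b (mem_cls12.mp ha).1 (mem_cls12.mp hb).1 hab)]
  -- single step invariance of block structure constants
  have hFstep : ∀ X0 Y0 Z₁ Z₂, rel12 B ψ₁ ψ₂ Z₁ Z₂ → ∀ z ∈ Z₁, ∀ z' ∈ Z₂,
      structConst (blk12 B ψ₁ ψ₂ X0) (blk12 B ψ₁ ψ₂ Y0) z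
        = structConst (blk12 B ψ₁ ψ₂ X0) (blk12 B ψ₁ ψ₂ Y0) z' := by
    intro X0 Y0 Z₁ Z₂ hrZ z hz z' hz'
    obtain ⟨hZ₁, hZ₂, hψeq⟩ := hrZ
    obtain ⟨w, hw⟩ := B'.nonempty_mem _ (mapsTo' h₁iso hZ₁)
    rw [hF, hF]
    have hpt : ∀ Xi ∈ cls12 B ψ₁ ψ₂ X0, ∀ Yj ∈ cls12 B ψ₁ ψ₂ Y0,
        structConst Xi Yj z = structConst (σ Xi) (σ Yj) z' := by
      intro Xi hXi Yj hYj
      have hXib := (mem_cls12.mp hXi).1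
      have hYjb := (mem_cls12.mp hYj).1
      have e1 : structConst Xi Yj z = structConst (ψ₁ Xi) (ψ₁ Yj) w :=
        h₁iso.2 _ hXib _ hYjb _ hZ₁ _ hz _ hw
      have hw2 : w ∈ ψ₂ Z₂ := by rw [← hψeq]; exact hw
      have e2 : structConst (σ Xi) (σ Yj) z'
          = structConst (ψ₂ (σ Xi)) (ψ₂ (σ Yj)) w :=
        h₂iso.2 _ (hσ Xi hXib).1 _ (hσ Yj hYjb).1 _ hZ₂ _ hz' _ hw2
      rw [e1, e2, (hσ Xi hXib).2, (hσ Yj hYjb).2]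
    have s0 : ∑ Xi ∈ cls12 B ψ₁ ψ₂ X0, ∑ Yj ∈ cls12 B ψ₁ ψ₂ Y0, structConst Xi Yj z
        = ∑ Xi ∈ cls12 B ψ₁ ψ₂ X0, ∑ Yj ∈ cls12 B ψ₁ ψ₂ Y0, structConst (σ Xi) (σ Yj) z' :=
      Finset.sum_congr rfl (fun Xi hXi => Finset.sum_congr rfl (fun Yj hYj => hpt Xi hXi Yj hYj))
    have s1 : ∑ Xi ∈ cls12 B ψ₁ ψ₂ X0, ∑ Yj ∈ cls12 B ψ₁ ψ₂ Y0, structConst (σ Xi) (σ Yj) z'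
        = ∑ Xi ∈ cls12 B ψ₁ ψ₂ X0, ∑ Yj ∈ cls12 B ψ₁ ψ₂ Y0, structConst (σ Xi) Yj z' :=
      Finset.sum_congr rfl (fun Xi _ => hreidx Y0 (fun V => structConst (σ Xi) V z'))
    rw [s0, s1]
    exact hreidx X0 (fun U => ∑ Yj ∈ cls12 B ψ₁ ψ₂ Y0, structConst U Yj z')
  -- full invariance
  have hFinv : ∀ X0 Y0 Z₁ Z₂, Relation.EqvGen (rel12 B ψ₁ ψ₂) Z₁ Z₂ → Z₁ ∈ B.basicSets →
      ∀ z ∈ Z₁, ∀ z' ∈ Z₂,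
      structConst (blk12 B ψ₁ ψ₂ X0) (blk12 B ψ₁ ψ₂ Y0) z
        = structConst (blk12 B ψ₁ ψ₂ X0) (blk12 B ψ₁ ψ₂ Y0) z' := by
    intro X0 Y0 Z₁ Z₂ hE12 hZ₁ z hz z' hz'
    have hrefl : ∀ Z, Z ∈ B.basicSets → ∀ u ∈ Z, ∀ v ∈ Z,
        structConst (blk12 B ψ₁ ψ₂ X0) (blk12 B ψ₁ ψ₂ Y0) u
          = structConst (blk12 B ψ₁ ψ₂ X0) (blk12 B ψ₁ ψ₂ Y0) v := by
      intro Z hZ u hu v hv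
      rw [hF, hF]
      refine Finset.sum_congr rfl (fun Xi hXi => Finset.sum_congr rfl (fun Yj hYj => ?_))
      exact B.structConst_eq _ (mem_cls12.mp hXi).1 _ (mem_cls12.mp hYj).1 _ hZ _ hu _ hv
    rcases eqvGen_elim (Q := fun U V => ∀ u ∈ U, ∀ v ∈ V,
        structConst (blk12 B ψ₁ ψ₂ X0) (blk12 B ψ₁ ψ₂ Y0) u
          = structConst (blk12 B ψ₁ ψ₂ X0) (blk12 B ψ₁ ψ₂ Y0) v)
      hmem hrefl
      (fun a b hq u hu v hv => (hq v hv u hu).symm)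
      (fun a b c hb hq1 hq2 u hu v hv => by
        obtain ⟨m, hm⟩ := B.nonempty_mem b hb
        exact (hq1 u hu m hm).trans (hq2 m hm v hv))
      (fun a b hr => hFstep X0 Y0 a b hr)
      Z₁ Z₂ hE12 with h | h
    · subst h; exact hrefl Z₁ hZ₁ z hz z' hz'
    · exact h.2.2 z hz z' hz'
  -- construct the fusion S-ring C
  obtain ⟨C, hCbs⟩ : ∃ C : SRing G, C.basicSets = B.basicSets.image (blk12 B ψ₁ ψ₂) := by
    refine ⟨⟨B.basicSets.image (blk12 B ψ₁ ψ₂), ?_, ?_, ?_, ?_, ?_, ?_⟩, rfl⟩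
    · intro W hW
      obtain ⟨Y, hY, rfl⟩ := Finset.mem_image.mp hW
      obtain ⟨g, hg⟩ := B.nonempty_mem Y hY
      exact ⟨g, hsubblk Y Y (hselfcls Y hY) hg⟩
    · intro g
      obtain ⟨Y, hY, hg⟩ := B.exists_mem g
      exact ⟨blk12 B ψ₁ ψ₂ Y, Finset.mem_image_of_mem _ hY, hsubblk Y Y (hselfcls Y hY) hg⟩
    · intro W₁ hW₁ W₂ hW₂ hne
      obtain ⟨Y₁, hY₁, rfl⟩ := Finset.mem_image.mp hW₁
      obtain ⟨Y₂, hY₂, rfl⟩ := Finset.mem_image.mp hW₂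
      rw [Finset.disjoint_left]
      intro g hg1 hg2
      obtain ⟨U₁, hU₁, hgU₁⟩ := mem_blk12.mp hg1
      obtain ⟨U₂, hU₂, hgU₂⟩ := mem_blk12.mp hg2
      have hU12 : U₁ = U₂ := basic_eq (mem_cls12.mp hU₁).1 (mem_cls12.mp hU₂).1 hgU₁ hgU₂
      apply hne
      have h2 := (mem_cls12.mp hU₂).2
      rw [← hU12] at h2
      have e1 : Relation.EqvGen (rel12 B ψ₁ ψ₂) Y₁ Y₂ :=
        Relation.EqvGen.trans _ _ _ (mem_cls12.mp hU₁).2 (Relation.EqvGen.symm _ _ h2)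
      show (cls12 B ψ₁ ψ₂ Y₁).biUnion id = (cls12 B ψ₁ ψ₂ Y₂).biUnion id
      rw [hclseq Y₁ Y₂ e1]
    · -- one_mem
      have h1 : ∀ a b, rel12 B ψ₁ ψ₂ a b → ((a = ({1} : Finset G)) ↔ (b = {1})) := by
        intro a b hab
        obtain ⟨ha, hb, heq⟩ := hab
        constructor
        · rintro rfl
          apply injOn' h₂iso hb B.one_mem
          rw [← heq, algIso_one h₁iso, algIso_one h₂iso]
        · rintro rfl
          apply injOn' h₁iso ha B.one_mem
          rw [heq, algIso_one h₂iso, algIso_one h₁iso]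
      have hcls1 : cls12 B ψ₁ ψ₂ ({1} : Finset G) = {({1} : Finset G)} := by
        ext U
        rw [mem_cls12, Finset.mem_singleton]
        constructor
        · rintro ⟨hU, hEU⟩
          rcases eqvGen_elim (Q := fun a b => (a = ({1} : Finset G)) ↔ (b = {1}))
            hmem (fun a _ => Iff.rfl) (fun a b h => h.symm) (fun a b c _ hq1 hq2 => hq1.trans hq2)
            h1 _ _ hEU with h | h
          · exact h.symm
          · exact h.2.2.mp rfl
        · rintro rfl
          exact ⟨B.one_mem, Relation.EqvGen.refl _⟩
      have hb1 : blk12 B ψ₁ ψ₂ ({1} : Finset G) = {1} := by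
        show (cls12 B ψ₁ ψ₂ ({1} : Finset G)).biUnion id = {1}
        rw [hcls1, Finset.singleton_biUnion, id]
      rw [← hb1]
      exact Finset.mem_image_of_mem _ B.one_mem
    · -- inv_mem
      intro W hW
      obtain ⟨Y, hY, rfl⟩ := Finset.mem_image.mp hW
      have hrinv : ∀ a b, rel12 B ψ₁ ψ₂ a b →
          rel12 B ψ₁ ψ₂ (a.image (fun x => x⁻¹)) (b.image (fun x => x⁻¹)) := by
        rintro a b ⟨ha, hb, heq⟩
        refine ⟨B.inv_mem a ha, B.inv_mem b hb, ?_⟩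
        rw [algIso_inv h₁iso ha, algIso_inv h₂iso hb, heq]
      have hblkinv : (blk12 B ψ₁ ψ₂ Y).image (fun x => x⁻¹)
          = blk12 B ψ₁ ψ₂ (Y.image (fun x => x⁻¹)) := by
        ext g
        rw [Finset.mem_image]
        constructor
        · rintro ⟨a, ha, rfl⟩
          obtain ⟨U, hU, haU⟩ := mem_blk12.mp ha
          obtain ⟨hUb, hEU⟩ := mem_cls12.mp hU
          exact mem_blk12.mpr ⟨U.image (fun x => x⁻¹),
            mem_cls12.mpr ⟨B.inv_mem U hUb, eqvGen_map hrinv _ _ hEU⟩,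
            Finset.mem_image_of_mem _ haU⟩
        · intro hg
          obtain ⟨V, hV, hgV⟩ := mem_blk12.mp hg
          obtain ⟨hVb, hEV⟩ := mem_cls12.mp hV
          have hEV' := eqvGen_map hrinv _ _ hEV
          have hYY : (Y.image (fun x : G => x⁻¹)).image (fun x => x⁻¹) = Y := by
            rw [Finset.image_image]
            simp
          rw [hYY] at hEV'
          refine ⟨g⁻¹, ?_, inv_inv g⟩
          exact mem_blk12.mpr ⟨V.image (fun x => x⁻¹),
            mem_cls12.mpr ⟨B.inv_mem V hVb, hEV'⟩, Finset.mem_image_of_mem _ hgV⟩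
      rw [hblkinv]
      exact Finset.mem_image_of_mem _ (B.inv_mem Y hY)
    · -- structConst_eq
      intro WX hWX WY hWY WZ hWZ z hz z' hz'
      obtain ⟨X0, hX0, rfl⟩ := Finset.mem_image.mp hWX
      obtain ⟨Y0, hY0, rfl⟩ := Finset.mem_image.mp hWY
      obtain ⟨Z0, hZ0, rfl⟩ := Finset.mem_image.mp hWZ
      obtain ⟨Z₁, hZ₁, hzZ₁⟩ := mem_blk12.mp hz
      obtain ⟨Z₂, hZ₂, hzZ₂⟩ := mem_blk12.mp hz'
      obtain ⟨hZ₁b, hE1⟩ := mem_cls12.mp hZ₁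
      obtain ⟨hZ₂b, hE2⟩ := mem_cls12.mp hZ₂
      exact hFinv X0 Y0 Z₁ Z₂
        (Relation.EqvGen.trans _ _ _ (Relation.EqvGen.symm _ _ hE1) hE2) hZ₁b z hzZ₁ z' hzZ₂
  -- A is a subring of C
  have hAC : A.SubringOf C := by
    intro X hX W hW hWX
    rw [hCbs] at hW
    obtain ⟨Y, hY, rfl⟩ := Finset.mem_image.mp hW
    obtain ⟨g, hg⟩ := hWX
    rw [Finset.mem_inter] at hg
    obtain ⟨U, hU, hgU⟩ := mem_blk12.mp hg.1
    obtain ⟨hUb, hEU⟩ := mem_cls12.mp hU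
    have hUX : U ⊆ X := hAB X hX U hUb ⟨g, Finset.mem_inter.mpr ⟨hgU, hg.2⟩⟩
    have hstep : ∀ a b, rel12 B ψ₁ ψ₂ a b → ((a ⊆ X) ↔ (b ⊆ X)) := by
      rintro a b ⟨ha, hb, heq⟩
      rw [subset_iff_ext h₁iso h₁ext hX ha, subset_iff_ext h₂iso h₂ext hX hb, heq]
    intro g' hg'
    obtain ⟨V, hV, hg'V⟩ := mem_blk12.mp hg'
    obtain ⟨hVb, hEV⟩ := mem_cls12.mp hV
    have hEUV : Relation.EqvGen (rel12 B ψ₁ ψ₂) U V :=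
      Relation.EqvGen.trans _ _ _ (Relation.EqvGen.symm _ _ hEU) hEV
    rcases eqvGen_elim (Q := fun a b => (a ⊆ X) ↔ (b ⊆ X)) hmem
      (fun a _ => Iff.rfl) (fun a b h => h.symm) (fun a b c _ hq1 hq2 => hq1.trans hq2) hstep
      U V hEUV with h | h
    · exact (h ▸ hUX) hg'V
    · exact (h.2.2.mp hUX) hg'V
  -- ξ belongs to C
  have hCξ : C.MemFun ξ := by
    intro W hW y hy y' hy'
    rw [hCbs] at hW
    obtain ⟨Y, hY, rfl⟩ := Finset.mem_image.mp hW
    obtain ⟨U, hU, hyU⟩ := mem_blk12.mp hy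
    obtain ⟨V, hV, hyV⟩ := mem_blk12.mp hy'
    obtain ⟨hUb, hEU⟩ := mem_cls12.mp hU
    obtain ⟨hVb, hEV⟩ := mem_cls12.mp hV
    have hEUV : Relation.EqvGen (rel12 B ψ₁ ψ₂) U V :=
      Relation.EqvGen.trans _ _ _ (Relation.EqvGen.symm _ _ hEU) hEV
    have hstep : ∀ a b, rel12 B ψ₁ ψ₂ a b → ∀ u ∈ a, ∀ v ∈ b, ξ u = ξ v := by
      rintro a b ⟨ha, hb, heq⟩ u hu v hv
      obtain ⟨w, hw⟩ := B'.nonempty_mem _ (mapsTo' h₁iso ha)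
      have hw2 : w ∈ ψ₂ b := heq ▸ hw
      rw [h₁map a ha u hu w hw, ← h₂map b hb v hv w hw2]
    rcases eqvGen_elim (Q := fun a b => ∀ u ∈ a, ∀ v ∈ b, ξ u = ξ v) hmem
      (fun a ha u hu v hv => hBξ a ha u hu v hv)
      (fun a b h u hu v hv => (h v hv u hu).symm)
      (fun a b c hb hq1 hq2 u hu v hv => by
        obtain ⟨m, hm⟩ := B.nonempty_mem b hb
        exact (hq1 u hu m hm).trans (hq2 m hm v hv))
      hstep U V hEUV with h | h
    · subst h; exact hBξ U hUb y hyU y' hyV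
    · exact h.2.2 y hyU y' hyV
  -- minimality: B ⊆ C, hence each block is a single basic set
  have hBC : B.SubringOf C := hBmin C hAC hCξ
  intro Y hY
  have hblkY : blk12 B ψ₁ ψ₂ Y ⊆ Y := by
    apply hBC Y hY (blk12 B ψ₁ ψ₂ Y)
    · rw [hCbs]; exact Finset.mem_image_of_mem _ hY
    · obtain ⟨g, hg⟩ := B.nonempty_mem Y hY
      exact ⟨g, Finset.mem_inter.mpr ⟨hsubblk Y Y (hselfcls Y hY) hg, hg⟩⟩
  have hσsub : σ Y ⊆ Y := by
    refine Finset.Subset.trans ?_ hblkY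
    exact hsubblk Y (σ Y) (mem_cls12.mpr ⟨(hσ Y hY).1, Relation.EqvGen.rel _ _ (hrσ Y hY)⟩)
  obtain ⟨g, hg⟩ := B.nonempty_mem (σ Y) (hσ Y hY).1
  have hσY : σ Y = Y := basic_eq (hσ Y hY).1 hY hg (hσsub hg)
  rw [← (hσ Y hY).2, hσY]
end

section
/- Let 𝒜 be an S-ring over a finite abelian group G which is the S-wreath product 𝒜_U ≀_S 𝒜_{G/L} with respect to an 𝒜-section S = U/L. Suppose that 𝒜_U and 𝒜_{G/L} are separable with respect to 𝒦_A and that Aut(𝒜_U)^S = Aut(𝒜_S). Then 𝒜 is separable with respect to 𝒦_A. In particular, the wreath product of two separable S-rings over abelian groups is separable with respect to 𝒦_A. -/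
open scoped Pointwise

namespace SRing

variable {G : Type*} [Group G] [Fintype G] [DecidableEq G]

/-- The automorphism group of an S-ring: all permutations `f` of `G` with
`R(X)^f = R(X)` for every basic set `X`. -/
def autPerm (A : SRing G) : Subgroup (Equiv.Perm G) where
  carrier := {f | ∀ X ∈ A.basicSets, ∀ g h : G, h * g⁻¹ ∈ X ↔ f h * (f g)⁻¹ ∈ X}
  one_mem' := by intro X hX g h; simp
  mul_mem' := by
    intro a b ha hb X hX g h
    rw [Equiv.Perm.mul_apply, Equiv.Perm.mul_apply]
    exact (hb X hX g h).trans (ha X hX (b g) (b h))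
  inv_mem' := by
    intro f hf X hX g h
    have h2 := hf X hX (f⁻¹ g) (f⁻¹ h)
    simp only [Equiv.Perm.inv_def, Equiv.apply_symm_apply] at h2
    exact h2.symm

end SRing

/-- The group of right translations `x ↦ x * h` inside `Sym(G)`. -/
def rightTranslations (G : Type*) [Group G] : Subgroup (Equiv.Perm G) where
  carrier := {f | ∃ h : G, ∀ x : G, f x = x * h}
  one_mem' := ⟨1, by simp⟩
  mul_mem' := by
    rintro a b ⟨h1, ha⟩ ⟨h2, hb⟩
    exact ⟨h2 * h1, fun x => by rw [Equiv.Perm.mul_apply, hb, ha, mul_assoc]⟩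
  inv_mem' := by
    rintro f ⟨h, hf⟩
    refine ⟨h⁻¹, fun x => ?_⟩
    have : f (x * h⁻¹) = x := by rw [hf, inv_mul_cancel_right]
    calc f⁻¹ x = f⁻¹ (f (x * h⁻¹)) := by rw [this]
    _ = x * h⁻¹ := by simp

/-- For `Δ` a set of permutations of `U` and `N ⊴ U`, the induced set `Δ^S` of permutations of
the section `S = U/N`, consisting of the maps induced by those elements of `Δ` that permute
the `N`-cosets. -/
def sectionAut {U : Type*} [Group U] (N : Subgroup U) [N.Normal]
    (Δ : Set (Equiv.Perm U)) : Set (Equiv.Perm (U ⧸ N)) :=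
  {σ | ∃ f ∈ Δ,
    (∀ u v : U, (QuotientGroup.mk u : U ⧸ N) = QuotientGroup.mk v →
      (QuotientGroup.mk (f u) : U ⧸ N) = QuotientGroup.mk (f v)) ∧
    ∀ u : U, σ (QuotientGroup.mk u) = QuotientGroup.mk (f u)}

namespace SRing

open Finset

variable {K : Type*} [CommGroup K] [Fintype K] [DecidableEq K]

theorem block_eq_of_mem (C : SRing K) {X Y : Finset K} (hX : X ∈ C.basicSets)
    (hY : Y ∈ C.basicSets) {g : K} (hgX : g ∈ X) (hgY : g ∈ Y) : X = Y := by
  by_contra hne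
  exact (C.disj X hX Y hY hne).forall_ne_finset hgX hgY rfl

theorem structConst_pos {X Y : Finset K} {z : K} :
    0 < structConst X Y z ↔ ∃ x ∈ X, ∃ y ∈ Y, x * y = z := by
  simp only [structConst, Finset.card_pos, Finset.filter_nonempty_iff, Finset.mem_product,
    Prod.exists]
  constructor
  · rintro ⟨a, b, ⟨ha, hb⟩, h⟩; exact ⟨a, ha, b, hb, h⟩
  · rintro ⟨a, ha, b, hb, h⟩; exact ⟨a, b, ⟨ha, hb⟩, h⟩

theorem structConst_biUnion_right {X : Finset K} {s : Finset (Finset K)}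
    (hdisj : ∀ Y ∈ s, ∀ Z ∈ s, Y ≠ Z → Disjoint Y Z) (z : K) :
    structConst X (s.biUnion id) z = ∑ Y ∈ s, structConst X Y z := by
  have hprod : X ×ˢ (s.biUnion id) = s.biUnion (fun Y => X ×ˢ Y) := by
    ext ⟨a, b⟩
    simp only [mem_product, mem_biUnion, id]
    tauto
  rw [structConst, hprod, filter_biUnion, card_biUnion]
  · rfl
  · intro Y hY Z hZ hne
    have := hdisj Y hY Z hZ hne
    simp only [disjoint_left] at this ⊢
    intro p hp hq
    simp only [mem_filter, mem_product] at hp hq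
    exact this hp.1.2 hq.1.2

theorem basicSets_biUnion_of_ASet (C : SRing K) {M : Finset K} (hM : C.IsASet M) :
    (C.basicSets.filter (· ⊆ M)).biUnion id = M := by
  ext m
  simp only [mem_biUnion, mem_filter, id]
  constructor
  · rintro ⟨Y, ⟨hY, hYM⟩, hm⟩; exact hYM hm
  · intro hm
    obtain ⟨W, hW, hmW⟩ := C.exists_mem m
    exact ⟨W, ⟨hW, hM W hW ⟨m, mem_inter.2 ⟨hmW, hm⟩⟩⟩, hmW⟩


theorem structConst_ASet (C : SRing K) {M : Finset K} (hM : C.IsASet M) (X : Finset K) (z : K) :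
    structConst X M z = ∑ Y ∈ C.basicSets.filter (· ⊆ M), structConst X Y z := by
  conv_lhs => rw [← C.basicSets_biUnion_of_ASet hM]
  exact structConst_biUnion_right (fun Y hY Z hZ hne =>
    C.disj Y (mem_filter.1 hY).1 Z (mem_filter.1 hZ).1 hne) z

theorem structConst_ASet_congr (C : SRing K) {M : Finset K} (hM : C.IsASet M)
    {X Z : Finset K} (hX : X ∈ C.basicSets) (hZ : Z ∈ C.basicSets) {z z' : K}
    (hz : z ∈ Z) (hz' : z' ∈ Z) :
    structConst X M z = structConst X M z' := by
  rw [structConst_ASet C hM, structConst_ASet C hM]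
  refine Finset.sum_congr rfl fun Y hY => ?_
  exact C.structConst_eq X hX Y (mem_filter.1 hY).1 Z hZ z hz z' hz'

theorem sum_structConst (X Y : Finset K) :
    ∑ z : K, structConst X Y z = X.card * Y.card := by
  rw [← Finset.card_product]
  exact (Finset.card_eq_sum_card_fiberwise
    (f := fun q : K × K => q.1 * q.2) (t := Finset.univ)
    (fun p _ => Finset.mem_univ _)).symm

theorem sum_card_basicSets (C : SRing K) :
    ∑ X ∈ C.basicSets, X.card = Fintype.card K := by
  have : C.basicSets.biUnion id = Finset.univ := by
    ext g
    simp only [mem_biUnion, mem_univ, id, iff_true]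
    obtain ⟨X, hX, hg⟩ := C.exists_mem g
    exact ⟨X, hX, hg⟩
  rw [← Finset.card_univ, ← this]
  exact (card_biUnion (fun X hX Y hY hne => C.disj X hX Y hY hne)).symm

end SRing
namespace SRing

open Finset

section AlgIso

variable {K K' : Type*} [CommGroup K] [Fintype K] [DecidableEq K]
  [CommGroup K'] [Fintype K'] [DecidableEq K']
variable {C : SRing K} {C' : SRing K'} {φ : Finset K → Finset K'}

theorem IsAlgIso.mem (hφ : C.IsAlgIso C' φ) {X : Finset K} (hX : X ∈ C.basicSets) :
    φ X ∈ C'.basicSets := hφ.1.mapsTo hX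

theorem IsAlgIso.inj (hφ : C.IsAlgIso C' φ) {X Y : Finset K} (hX : X ∈ C.basicSets)
    (hY : Y ∈ C.basicSets) (h : φ X = φ Y) : X = Y := hφ.1.injOn hX hY h

theorem IsAlgIso.surj (hφ : C.IsAlgIso C' φ) {Y : Finset K'} (hY : Y ∈ C'.basicSets) :
    ∃ X ∈ C.basicSets, φ X = Y := by
  obtain ⟨X, hX, hXY⟩ := hφ.1.surjOn hY
  exact ⟨X, hX, hXY⟩

theorem IsAlgIso.nonempty (hφ : C.IsAlgIso C' φ) {X : Finset K} (hX : X ∈ C.basicSets) :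
    (φ X).Nonempty := C'.nonempty_mem _ (hφ.mem hX)

theorem structConst_one_eq (Y Y' : Finset K) :
    structConst Y Y' 1 = (Y ∩ Y'.image (fun x => x⁻¹)).card := by
  rw [structConst, ← Finset.card_image_of_injective _
    (f := fun a : K => (a, a⁻¹)) (fun a b h => (Prod.mk.injEq _ _ _ _ ▸ h).1)]
  congr 1
  ext ⟨a, b⟩
  simp only [mem_filter, mem_product, mem_image, mem_inter, Prod.mk.injEq]
  constructor
  · rintro ⟨⟨ha, hb⟩, hab⟩
    have hb' : b = a⁻¹ := by
      rw [eq_inv_iff_mul_eq_one, mul_comm]; exact hab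
    exact ⟨a, ⟨ha, ⟨b, hb, by rw [hb']; exact inv_inv a⟩⟩, rfl, hb'.symm⟩
  · rintro ⟨x, ⟨hx, ⟨y, hy, hyx⟩⟩, rfl, rfl⟩
    refine ⟨⟨hx, ?_⟩, mul_inv_cancel x⟩
    rw [← hyx, inv_inv]; exact hy

theorem IsAlgIso.map_one (hφ : C.IsAlgIso C' φ) : φ ({1} : Finset K) = {1} := by
  obtain ⟨Z₀, hZ₀, hφZ₀⟩ := hφ.surj C'.one_mem
  suffices hone : Z₀ = {1} by rw [← hone, hφZ₀]
  have h11 : structConst ({1} : Finset K') {1} 1 = 1 := by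
    simp [structConst, Finset.singleton_product_singleton, Finset.filter_singleton]
  have s1 : ∀ z ∈ Z₀, structConst Z₀ Z₀ z = 1 := by
    intro z hz
    rw [hφ.2 Z₀ hZ₀ Z₀ hZ₀ Z₀ hZ₀ z hz 1 (by rw [hφZ₀]; exact mem_singleton_self 1), hφZ₀, h11]
  have s2 : ∀ z : K, z ∉ Z₀ → structConst Z₀ Z₀ z = 0 := by
    intro z hz
    obtain ⟨Z', hZ', hzZ'⟩ := C.exists_mem z
    have hne : Z' ≠ Z₀ := fun h => hz (h ▸ hzZ')
    obtain ⟨z', hz'⟩ := hφ.nonempty hZ'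
    rw [hφ.2 Z₀ hZ₀ Z₀ hZ₀ Z' hZ' z hzZ' z' hz', hφZ₀]
    have hz'ne : z' ≠ 1 := by
      rintro rfl
      exact hne (hφ.inj hZ' hZ₀ (C'.block_eq_of_mem (hφ.mem hZ') (hφ.mem hZ₀) hz'
        (by rw [hφZ₀]; exact mem_singleton_self 1)))
    simp [structConst, Finset.singleton_product_singleton, filter_singleton, hz'ne.symm]
  have hsum : ∑ z : K, structConst Z₀ Z₀ z = Z₀.card := by
    rw [← Finset.sum_subset (Finset.subset_univ Z₀) (fun z _ hz => s2 z hz)]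
    rw [Finset.sum_congr rfl s1, Finset.sum_const, smul_eq_mul, mul_one]
  have hcard : Z₀.card * Z₀.card = Z₀.card := by rw [← sum_structConst Z₀ Z₀, hsum]
  have hpos : 0 < Z₀.card := card_pos.2 (C.nonempty_mem _ hZ₀)
  have hc1 : Z₀.card = 1 := by
    by_contra h
    rcases Nat.lt_or_ge Z₀.card 2 with h2 | h2
    · interval_cases h3 : Z₀.card <;> omega
    · nlinarith
  obtain ⟨g, hg⟩ := card_eq_one.1 hc1
  have hgg := s1 g (by rw [hg]; exact mem_singleton_self g)
  rw [hg] at hgg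
  have : g * g = g := by
    by_contra hne
    simp [structConst, Finset.singleton_product_singleton, filter_singleton, hne] at hgg
  have hg1 : g = 1 := mul_eq_right.1 this
  rw [hg, hg1]

theorem IsAlgIso.inv_card_aux (hφ : C.IsAlgIso C' φ) {X : Finset K} (hX : X ∈ C.basicSets) :
    φ (X.image (fun x => x⁻¹)) = (φ X).image (fun x => x⁻¹) ∧ (φ X).card = X.card := by
  set Xi := X.image (fun x => x⁻¹) with hXi
  have hXiB : Xi ∈ C.basicSets := C.inv_mem X hX
  have c1 : structConst X Xi 1 = X.card := by
    rw [structConst_one_eq]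
    have : Xi.image (fun x => x⁻¹) = X := by
      rw [hXi, Finset.image_image]
      ext b; simp
    rw [this, Finset.inter_self]
  have c2 : structConst (φ X) (φ Xi) 1 = X.card := by
    rw [← hφ.2 X hX Xi hXiB {1} C.one_mem 1 (mem_singleton_self 1) 1
      (by rw [hφ.map_one]; exact mem_singleton_self 1), c1]
  rw [structConst_one_eq] at c2
  have hXpos : 0 < X.card := card_pos.2 (C.nonempty_mem _ hX)
  have hne : (φ X ∩ (φ Xi).image (fun x => x⁻¹)).Nonempty := by
    rw [← card_pos, c2]; exact hXpos
  obtain ⟨a, ha⟩ := hne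
  have haX := (mem_inter.1 ha).1
  have haXi := (mem_inter.1 ha).2
  have hblk : (φ Xi).image (fun x => x⁻¹) ∈ C'.basicSets := C'.inv_mem _ (hφ.mem hXiB)
  have heq : φ X = (φ Xi).image (fun x => x⁻¹) :=
    C'.block_eq_of_mem (hφ.mem hX) hblk haX haXi
  constructor
  · rw [heq, Finset.image_image]
    ext b; simp
  · rw [← c2]
    congr 1
    rw [← heq, Finset.inter_self]

theorem IsAlgIso.map_inv (hφ : C.IsAlgIso C' φ) {X : Finset K} (hX : X ∈ C.basicSets) :
    φ (X.image (fun x => x⁻¹)) = (φ X).image (fun x => x⁻¹) := (hφ.inv_card_aux hX).1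

theorem IsAlgIso.card_map (hφ : C.IsAlgIso C' φ) {X : Finset K} (hX : X ∈ C.basicSets) :
    (φ X).card = X.card := (hφ.inv_card_aux hX).2

theorem IsAlgIso.card_eq (hφ : C.IsAlgIso C' φ) : Fintype.card K = Fintype.card K' := by
  rw [← sum_card_basicSets C, ← sum_card_basicSets C']
  exact Finset.sum_bij (fun X _ => φ X) (fun X hX => hφ.mem hX)
    (fun X hX Y hY h => hφ.inj hX hY h)
    (fun Y hY => by obtain ⟨X, hX, h⟩ := hφ.surj hY; exact ⟨X, hX, h⟩)
    (fun X hX => (hφ.card_map hX).symm)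

end AlgIso

end SRing
namespace SRing

open Finset

section QuotSingle

variable {K : Type*} [CommGroup K] [Fintype K] [DecidableEq K]
variable (N : Subgroup K) [DecidablePred (· ∈ N)]
variable [Fintype (K ⧸ N)] [DecidableEq (K ⧸ N)]

/-- Image of a finset in the quotient. -/
def qimg (X : Finset K) : Finset (K ⧸ N) :=
  X.image (fun g => (QuotientGroup.mk g : K ⧸ N))

/-- Number of elements of `X` in the `N`-coset of `z`. -/
def kcount (X : Finset K) (z : K) : ℕ :=
  (X.filter (fun a => (QuotientGroup.mk a : K ⧸ N) = QuotientGroup.mk z)).card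

/-- Number of pairs in `X × Y` whose product is congruent to `z` mod `N`. -/
def Tcard (X Y : Finset K) (z : K) : ℕ :=
  ((X ×ˢ Y).filter
    (fun p => (QuotientGroup.mk (p.1 * p.2) : K ⧸ N) = QuotientGroup.mk z)).card

theorem qimg_def (X : Finset K) :
    qimg N X = X.image (fun g => (QuotientGroup.mk g : K ⧸ N)) := rfl

theorem kcount_eq_structConst (X : Finset K) (z : K) :
    kcount N X z = structConst X (Finset.univ.filter (· ∈ N)) z := by
  rw [kcount, structConst, ← Finset.card_image_of_injective
    (f := fun a : K => (a, a⁻¹ * z)) _ (fun a b h => (Prod.mk.injEq _ _ _ _ ▸ h).1)]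
  congr 1
  ext ⟨a, b⟩
  simp only [mem_image, mem_filter, mem_product, mem_univ, true_and, Prod.mk.injEq]
  constructor
  · rintro ⟨x, ⟨hx, hmk⟩, rfl, rfl⟩
    exact ⟨⟨hx, (QuotientGroup.eq).1 hmk⟩, by group⟩
  · rintro ⟨⟨ha, hb⟩, hab⟩
    refine ⟨a, ⟨ha, (QuotientGroup.eq).2 ?_⟩, rfl, by rw [← hab]; group⟩
    rw [← hab]
    simpa using hb

variable {N}

theorem kcount_congr (C : SRing K) (hN : C.IsASet (Finset.univ.filter (· ∈ N)))
    {X Z : Finset K} (hX : X ∈ C.basicSets) (hZ : Z ∈ C.basicSets) {z z' : K}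
    (hz : z ∈ Z) (hz' : z' ∈ Z) : kcount N X z = kcount N X z' := by
  rw [kcount_eq_structConst, kcount_eq_structConst]
  exact structConst_ASet_congr C hN hX hZ hz hz'

theorem kcount_eq_of_mkeq {X : Finset K} {z z' : K}
    (h : (QuotientGroup.mk z : K ⧸ N) = QuotientGroup.mk z') :
    kcount N X z = kcount N X z' := by
  unfold kcount
  congr 1
  apply Finset.filter_congr
  intro a _
  simp [h]

theorem mem_qimg_iff_kcount_pos {X : Finset K} {z : K} :
    (QuotientGroup.mk z : K ⧸ N) ∈ qimg N X ↔ 0 < kcount N X z := by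
  rw [qimg, kcount, Finset.card_pos]
  constructor
  · rintro h
    rw [mem_image] at h
    obtain ⟨a, ha, hmk⟩ := h
    exact ⟨a, mem_filter.2 ⟨ha, hmk⟩⟩
  · rintro ⟨a, ha⟩
    rw [mem_image]
    exact ⟨a, (mem_filter.1 ha).1, (mem_filter.1 ha).2⟩

theorem mem_qimg_mk {X : Finset K} {x : K} (hx : x ∈ X) :
    (QuotientGroup.mk x : K ⧸ N) ∈ qimg N X :=
  mem_image.2 ⟨x, hx, rfl⟩

/-- The quotient images of two basic sets are equal or disjoint. -/
theorem qimg_eq_of_mem (C : SRing K) (hN : C.IsASet (Finset.univ.filter (· ∈ N)))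
    {Z W : Finset K} (hZ : Z ∈ C.basicSets) (hW : W ∈ C.basicSets) {q : K ⧸ N}
    (hqZ : q ∈ qimg N Z) (hqW : q ∈ qimg N W) : qimg N Z = qimg N W := by
  have key : ∀ Z W, Z ∈ C.basicSets → W ∈ C.basicSets →
      q ∈ qimg N Z → q ∈ qimg N W → qimg N Z ⊆ qimg N W := by
    intro Z W hZ hW hqZ hqW
    obtain ⟨z, hzZ, hmkz⟩ := mem_image.1 hqZ
    intro p hp
    obtain ⟨ζ, hζZ, hmkζ⟩ := mem_image.1 hp
    have h1 : 0 < kcount N W z := by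
      rw [← mem_qimg_iff_kcount_pos, hmkz]; exact hqW
    have h2 : kcount N W ζ = kcount N W z := kcount_congr C hN hW hZ hζZ hzZ
    rw [← hmkζ, mem_qimg_iff_kcount_pos, h2]
    exact h1
  exact Finset.Subset.antisymm (key Z W hZ hW hqZ hqW) (key W Z hW hZ hqW hqZ)

/-- Fiberwise counting: `Tcard` in terms of the quotient structure constant. -/
theorem Tcard_eq (C : SRing K) (hN : C.IsASet (Finset.univ.filter (· ∈ N)))
    {X Y : Finset K} (hX : X ∈ C.basicSets) (hY : Y ∈ C.basicSets) (z : K)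
    {x₀ y₀ : K} (hx₀ : x₀ ∈ X) (hy₀ : y₀ ∈ Y) :
    Tcard N X Y z = kcount N X x₀ * kcount N Y y₀ *
      structConst (qimg N X) (qimg N Y) (QuotientGroup.mk z) := by
  rw [Tcard, Finset.card_eq_sum_card_fiberwise
    (f := fun p : K × K => ((QuotientGroup.mk p.1 : K ⧸ N), (QuotientGroup.mk p.2 : K ⧸ N)))
    (t := (qimg N X ×ˢ qimg N Y).filter (fun q => q.1 * q.2 = QuotientGroup.mk z))
    (by
      rintro ⟨a, b⟩ hp
      rw [Finset.mem_coe, mem_filter] at hp ⊢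
      rw [mem_product] at hp ⊢
      exact ⟨⟨mem_qimg_mk hp.1.1, mem_qimg_mk hp.1.2⟩, by
        rw [← QuotientGroup.mk_mul]; exact hp.2⟩)]
  rw [structConst, mul_comm, ← Finset.sum_const_nat (m := kcount N X x₀ * kcount N Y y₀)]
  · intro q hq
    obtain ⟨q1, q2⟩ := q
    rw [mem_filter, mem_product] at hq
    obtain ⟨⟨hq1, hq2⟩, hqmul⟩ := hq
    dsimp only at hq1 hq2 hqmul
    obtain ⟨a₀, ha₀, hmka₀⟩ := mem_image.1 hq1
    obtain ⟨b₀, hb₀, hmkb₀⟩ := mem_image.1 hq2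
    have hfib : ((X ×ˢ Y).filter
        (fun p => (QuotientGroup.mk (p.1 * p.2) : K ⧸ N) = QuotientGroup.mk z)).filter
        (fun p => ((QuotientGroup.mk p.1 : K ⧸ N), (QuotientGroup.mk p.2 : K ⧸ N)) = (q1, q2))
        = (X.filter (fun a => (QuotientGroup.mk a : K ⧸ N) = QuotientGroup.mk a₀)) ×ˢ
          (Y.filter (fun b => (QuotientGroup.mk b : K ⧸ N) = QuotientGroup.mk b₀)) := by
      ext ⟨a, b⟩
      simp only [mem_filter, mem_product, Prod.mk.injEq]
      constructor
      · rintro ⟨⟨⟨ha, hb⟩, _⟩, h1, h2⟩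
        exact ⟨⟨ha, by rw [h1, ← hmka₀]⟩, ⟨hb, by rw [h2, ← hmkb₀]⟩⟩
      · rintro ⟨⟨ha, h1⟩, ⟨hb, h2⟩⟩
        refine ⟨⟨⟨ha, hb⟩, ?_⟩, by rw [h1, ← hmka₀], by rw [h2, ← hmkb₀]⟩
        rw [QuotientGroup.mk_mul, h1, h2, hmka₀, hmkb₀]
        exact hqmul
    rw [hfib, Finset.card_product]
    congr 1
    · exact kcount_congr C hN hX hX ha₀ hx₀
    · exact kcount_congr C hN hY hY hb₀ hy₀

/-- `Tcard` as a double sum over basic sets. -/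
theorem Tcard_eq_sum (C : SRing K) (X Y : Finset K) (z : K) :
    Tcard N X Y z = ∑ W ∈ C.basicSets,
      ∑ w ∈ W.filter (fun a => (QuotientGroup.mk a : K ⧸ N) = QuotientGroup.mk z),
        structConst X Y w := by
  rw [Tcard, Finset.card_eq_sum_card_fiberwise
    (f := fun p : K × K => p.1 * p.2)
    (t := Finset.univ.filter (fun w => (QuotientGroup.mk w : K ⧸ N) = QuotientGroup.mk z))
    (by
      rintro ⟨a, b⟩ hp
      rw [Finset.mem_coe, mem_filter] at hp
      exact mem_filter.2 ⟨mem_univ _, hp.2⟩)]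
  have hsplit : Finset.univ.filter
      (fun w : K => (QuotientGroup.mk w : K ⧸ N) = QuotientGroup.mk z)
      = C.basicSets.biUnion
        (fun W => W.filter (fun a => (QuotientGroup.mk a : K ⧸ N) = QuotientGroup.mk z)) := by
    ext w
    simp only [mem_filter, mem_univ, true_and, mem_biUnion]
    constructor
    · intro hw
      obtain ⟨W, hW, hwW⟩ := C.exists_mem w
      exact ⟨W, hW, hwW, hw⟩
    · rintro ⟨W, _, _, hw⟩
      exact hw
  rw [hsplit, Finset.sum_biUnion (by
    intro W hW V hV hne
    exact Finset.disjoint_filter_filter (C.disj W hW V hV hne))]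
  refine Finset.sum_congr rfl fun W _ => Finset.sum_congr rfl fun w hw => ?_
  have hmk := (mem_filter.1 hw).2
  have : ((X ×ˢ Y).filter
      (fun p => (QuotientGroup.mk (p.1 * p.2) : K ⧸ N) = QuotientGroup.mk z)).filter
      (fun p => p.1 * p.2 = w) = (X ×ˢ Y).filter (fun p => p.1 * p.2 = w) := by
    ext ⟨a, b⟩
    simp only [mem_filter, mem_product]
    constructor
    · rintro ⟨⟨h1, _⟩, h2⟩; exact ⟨h1, h2⟩
    · rintro ⟨h1, h2⟩; exact ⟨⟨h1, by rw [h2]; exact hmk⟩, h2⟩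
  rw [this, structConst]

end QuotSingle

end SRing
namespace SRing

open Finset

section QuotPres

variable {K K' : Type*} [CommGroup K] [Fintype K] [DecidableEq K]
  [CommGroup K'] [Fintype K'] [DecidableEq K']
variable {N : Subgroup K} [DecidablePred (· ∈ N)]
variable [Fintype (K ⧸ N)] [DecidableEq (K ⧸ N)]
variable {N' : Subgroup K'} [DecidablePred (· ∈ N')]
variable [Fintype (K' ⧸ N')] [DecidableEq (K' ⧸ N')]
variable {C : SRing K} {C' : SRing K'} {φ : Finset K → Finset K'}

/-- Context for transferring quotient data along an algebraic isomorphism. -/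
structure QuotCtx (C : SRing K) (C' : SRing K') (N : Subgroup K) (N' : Subgroup K')
    [DecidablePred (· ∈ N)] [DecidablePred (· ∈ N')] (φ : Finset K → Finset K') : Prop where
  alg : C.IsAlgIso C' φ
  hN : C.IsASet (Finset.univ.filter (· ∈ N))
  hN' : C'.IsASet (Finset.univ.filter (· ∈ N'))
  corr : ∀ V ∈ C.basicSets, (V ⊆ Finset.univ.filter (· ∈ N) ↔
    φ V ⊆ Finset.univ.filter (· ∈ N'))

theorem QuotCtx.kpres (hq : QuotCtx C C' N N' φ)
    {W Z : Finset K} (hW : W ∈ C.basicSets) (hZ : Z ∈ C.basicSets)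
    {z : K} (hz : z ∈ Z) {z' : K'} (hz' : z' ∈ φ Z) :
    kcount N W z = kcount N' (φ W) z' := by
  rw [kcount_eq_structConst, kcount_eq_structConst,
    structConst_ASet C hq.hN, structConst_ASet C' hq.hN']
  refine Finset.sum_bij (fun V _ => φ V) ?_ ?_ ?_ ?_
  · intro V hV
    rw [mem_filter] at hV ⊢
    exact ⟨hq.alg.mem hV.1, (hq.corr V hV.1).1 hV.2⟩
  · intro V₁ hV₁ V₂ hV₂ h
    exact hq.alg.inj (mem_filter.1 hV₁).1 (mem_filter.1 hV₂).1 h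
  · intro V' hV'
    rw [mem_filter] at hV'
    obtain ⟨V, hV, rfl⟩ := hq.alg.surj hV'.1
    exact ⟨V, mem_filter.2 ⟨hV, (hq.corr V hV).2 hV'.2⟩, rfl⟩
  · intro V hV
    exact hq.alg.2 W hW V (mem_filter.1 hV).1 Z hZ z hz z' hz'

theorem QuotCtx.mem_qimg_pres (hq : QuotCtx C C' N N' φ)
    {W Z : Finset K} (hW : W ∈ C.basicSets) (hZ : Z ∈ C.basicSets)
    {z : K} (hz : z ∈ Z) {z' : K'} (hz' : z' ∈ φ Z) :
    ((QuotientGroup.mk z : K ⧸ N) ∈ qimg N W ↔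
      (QuotientGroup.mk z' : K' ⧸ N') ∈ qimg N' (φ W)) := by
  rw [mem_qimg_iff_kcount_pos, mem_qimg_iff_kcount_pos, hq.kpres hW hZ hz hz']

theorem QuotCtx.qimg_eq_pres (hq : QuotCtx C C' N N' φ)
    {X X₀ : Finset K} (hX : X ∈ C.basicSets) (hX₀ : X₀ ∈ C.basicSets)
    (h : qimg N X = qimg N X₀) : qimg N' (φ X) = qimg N' (φ X₀) := by
  apply Finset.Subset.antisymm
  · intro q' hq'
    obtain ⟨x', hx', rfl⟩ := mem_image.1 hq'
    obtain ⟨x, hx⟩ := C.nonempty_mem X hX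
    have h1 : (QuotientGroup.mk x : K ⧸ N) ∈ qimg N X₀ := by
      rw [← h]; exact mem_qimg_mk hx
    exact (hq.mem_qimg_pres hX₀ hX hx hx').1 h1
  · intro q' hq'
    obtain ⟨x₀', hx₀', rfl⟩ := mem_image.1 hq'
    obtain ⟨x₀, hx₀⟩ := C.nonempty_mem X₀ hX₀
    have h1 : (QuotientGroup.mk x₀ : K ⧸ N) ∈ qimg N X := by
      rw [h]; exact mem_qimg_mk hx₀
    exact (hq.mem_qimg_pres hX hX₀ hx₀ hx₀').1 h1

theorem QuotCtx.qimg_eq_pres' (hq : QuotCtx C C' N N' φ)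
    {X X₀ : Finset K} (hX : X ∈ C.basicSets) (hX₀ : X₀ ∈ C.basicSets)
    (h : qimg N' (φ X) = qimg N' (φ X₀)) : qimg N X = qimg N X₀ := by
  apply Finset.Subset.antisymm
  · intro q hmem
    obtain ⟨x, hx, rfl⟩ := mem_image.1 hmem
    obtain ⟨x', hx'⟩ := hq.alg.nonempty hX
    refine (hq.mem_qimg_pres hX₀ hX hx hx').2 ?_
    rw [← h]; exact mem_qimg_mk hx'
  · intro q hmem
    obtain ⟨x₀, hx₀, rfl⟩ := mem_image.1 hmem
    obtain ⟨x₀', hx₀'⟩ := hq.alg.nonempty hX₀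
    refine (hq.mem_qimg_pres hX hX₀ hx₀ hx₀').2 ?_
    rw [h]; exact mem_qimg_mk hx₀'

theorem QuotCtx.Tcard_pres (hq : QuotCtx C C' N N' φ)
    {X Y Z : Finset K} (hX : X ∈ C.basicSets) (hY : Y ∈ C.basicSets)
    (hZ : Z ∈ C.basicSets) {z : K} (hz : z ∈ Z) {z' : K'} (hz' : z' ∈ φ Z) :
    Tcard N X Y z = Tcard N' (φ X) (φ Y) z' := by
  rw [Tcard_eq_sum C, Tcard_eq_sum C']
  refine Finset.sum_bij (fun W _ => φ W) (fun W hW => hq.alg.mem hW)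
    (fun W₁ h₁ W₂ h₂ h => hq.alg.inj h₁ h₂ h)
    (fun W' hW' => by obtain ⟨W, hW, h⟩ := hq.alg.surj hW'; exact ⟨W, hW, h⟩) ?_
  intro W hW
  have hcard : kcount N W z = kcount N' (φ W) z' := hq.kpres hW hZ hz hz'
  simp only [kcount] at hcard
  rcases Finset.eq_empty_or_nonempty
      (W.filter (fun a => (QuotientGroup.mk a : K ⧸ N) = QuotientGroup.mk z)) with he | hne
  · have he' : ((φ W).filter
        (fun a => (QuotientGroup.mk a : K' ⧸ N') = QuotientGroup.mk z')) = ∅ := by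
      rw [← Finset.card_eq_zero, ← hcard, he, Finset.card_empty]
    rw [he, he', Finset.sum_empty, Finset.sum_empty]
  · obtain ⟨w₁, hw₁⟩ := hne
    have hw₁W := (mem_filter.1 hw₁).1
    have hne' : ((φ W).filter
        (fun a => (QuotientGroup.mk a : K' ⧸ N') = QuotientGroup.mk z')).Nonempty := by
      rw [← Finset.card_pos, ← hcard, Finset.card_pos]
      exact ⟨w₁, hw₁⟩
    obtain ⟨w₁', hw₁'⟩ := hne'
    have hw₁'W := (mem_filter.1 hw₁').1
    have hval : structConst X Y w₁ = structConst (φ X) (φ Y) w₁' :=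
      hq.alg.2 X hX Y hY W hW w₁ hw₁W w₁' hw₁'W
    calc ∑ w ∈ W.filter (fun a => (QuotientGroup.mk a : K ⧸ N) = QuotientGroup.mk z),
          structConst X Y w
        = ∑ _w ∈ W.filter (fun a => (QuotientGroup.mk a : K ⧸ N) = QuotientGroup.mk z),
          structConst X Y w₁ := by
          refine Finset.sum_congr rfl fun w hw => ?_
          exact C.structConst_eq X hX Y hY W hW w (mem_filter.1 hw).1 w₁ hw₁W
      _ = ∑ _w' ∈ (φ W).filter
            (fun a => (QuotientGroup.mk a : K' ⧸ N') = QuotientGroup.mk z'),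
          structConst (φ X) (φ Y) w₁' := by
          rw [Finset.sum_const, Finset.sum_const, hcard, hval]
      _ = ∑ w' ∈ (φ W).filter
            (fun a => (QuotientGroup.mk a : K' ⧸ N') = QuotientGroup.mk z'),
          structConst (φ X) (φ Y) w' := by
          refine Finset.sum_congr rfl fun w' hw' => ?_
          exact C'.structConst_eq (φ X) (hq.alg.mem hX) (φ Y) (hq.alg.mem hY) (φ W)
            (hq.alg.mem hW) w₁' hw₁'W w' (mem_filter.1 hw').1

theorem QuotCtx.quot_structConst_pres (hq : QuotCtx C C' N N' φ)
    {X Y Z : Finset K} (hX : X ∈ C.basicSets) (hY : Y ∈ C.basicSets)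
    (hZ : Z ∈ C.basicSets) {z : K} (hz : z ∈ Z) {z' : K'} (hz' : z' ∈ φ Z) :
    structConst (qimg N X) (qimg N Y) (QuotientGroup.mk z)
      = structConst (qimg N' (φ X)) (qimg N' (φ Y)) (QuotientGroup.mk z') := by
  obtain ⟨x₀, hx₀⟩ := C.nonempty_mem X hX
  obtain ⟨y₀, hy₀⟩ := C.nonempty_mem Y hY
  obtain ⟨x₀', hx₀'⟩ := hq.alg.nonempty hX
  obtain ⟨y₀', hy₀'⟩ := hq.alg.nonempty hY
  have h1 := Tcard_eq C hq.hN hX hY z hx₀ hy₀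
  have h2 := Tcard_eq C' hq.hN' (hq.alg.mem hX) (hq.alg.mem hY) z' hx₀' hy₀'
  have h3 := hq.Tcard_pres hX hY hZ hz hz'
  have hkx : kcount N X x₀ = kcount N' (φ X) x₀' := hq.kpres hX hX hx₀ hx₀'
  have hky : kcount N Y y₀ = kcount N' (φ Y) y₀' := hq.kpres hY hY hy₀ hy₀'
  have hkxpos : 0 < kcount N X x₀ := by
    rw [← mem_qimg_iff_kcount_pos]; exact mem_qimg_mk hx₀
  have hkypos : 0 < kcount N Y y₀ := by
    rw [← mem_qimg_iff_kcount_pos]; exact mem_qimg_mk hy₀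
  rw [h1, h2, ← hkx, ← hky] at h3
  exact Nat.eq_of_mul_eq_mul_left (Nat.mul_pos hkxpos hkypos) h3

end QuotPres

end SRing
namespace SRing

open Finset

section SubSR

variable {K : Type*} [CommGroup K] [Fintype K] [DecidableEq K]
variable (P : Subgroup K) [DecidablePred (· ∈ P)]

theorem structConst_subtype {X Y : Finset K} (hX : ∀ x ∈ X, x ∈ P) (hY : ∀ y ∈ Y, y ∈ P)
    (z : ↥P) :
    structConst (X.subtype (· ∈ P)) (Y.subtype (· ∈ P)) z = structConst X Y (z : K) := by
  rw [structConst, structConst, ← Finset.card_image_of_injective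
    (f := fun p : ↥P × ↥P => ((p.1 : K), (p.2 : K))) _
    (fun a b h => by
      obtain ⟨h1, h2⟩ := Prod.mk.injEq _ _ _ _ ▸ h
      exact Prod.ext (Subtype.ext h1) (Subtype.ext h2))]
  congr 1
  ext ⟨a, b⟩
  simp only [mem_image, mem_filter, mem_product, Finset.mem_subtype, Prod.mk.injEq,
    Prod.exists]
  constructor
  · rintro ⟨u, v, ⟨⟨hu, hv⟩, huv⟩, rfl, rfl⟩
    exact ⟨⟨hu, hv⟩, by rw [← huv]; rfl⟩
  · rintro ⟨⟨ha, hb⟩, hab⟩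
    exact ⟨⟨a, hX a ha⟩, ⟨b, hY b hb⟩, ⟨⟨ha, hb⟩, Subtype.ext hab⟩, rfl, rfl⟩

/-- The induced S-ring on a subgroup which is an `A`-set. -/
def subSR (C : SRing K) (hP : C.IsASet (Finset.univ.filter (· ∈ P))) : SRing ↥P where
  basicSets := (C.basicSets.filter (fun X => X ⊆ Finset.univ.filter (· ∈ P))).image
    (Finset.subtype (· ∈ P))
  nonempty_mem := by
    rintro T hT
    obtain ⟨X, hX, rfl⟩ := mem_image.1 hT
    rw [mem_filter] at hX
    obtain ⟨x, hx⟩ := C.nonempty_mem X hX.1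
    have hxP : x ∈ P := by have := hX.2 hx; rw [mem_filter] at this; exact this.2
    exact ⟨⟨x, hxP⟩, Finset.mem_subtype.2 hx⟩
  exists_mem := by
    intro u
    obtain ⟨X, hX, hu⟩ := C.exists_mem (u : K)
    have hXP : X ⊆ Finset.univ.filter (· ∈ P) := by
      refine hP X hX ⟨(u : K), mem_inter.2 ⟨hu, mem_filter.2 ⟨mem_univ _, u.2⟩⟩⟩
    exact ⟨X.subtype (· ∈ P), mem_image.2 ⟨X, mem_filter.2 ⟨hX, hXP⟩, rfl⟩,
      Finset.mem_subtype.2 hu⟩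
  disj := by
    rintro T hT T' hT' hne
    obtain ⟨X, hX, rfl⟩ := mem_image.1 hT
    obtain ⟨X', hX', rfl⟩ := mem_image.1 hT'
    rw [Finset.disjoint_left]
    intro u hu hu'
    rw [Finset.mem_subtype] at hu hu'
    have : X = X' := C.block_eq_of_mem (mem_filter.1 hX).1 (mem_filter.1 hX').1 hu hu'
    exact hne (by rw [this])
  one_mem := by
    refine mem_image.2 ⟨{1}, mem_filter.2 ⟨C.one_mem, ?_⟩, ?_⟩
    · intro x hx
      rw [Finset.mem_singleton] at hx
      subst hx
      exact mem_filter.2 ⟨mem_univ _, P.one_mem⟩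
    · ext u
      simp only [Finset.mem_subtype, Finset.mem_singleton]
      constructor
      · intro h; exact Subtype.ext (by simpa using h)
      · rintro rfl; simp
  inv_mem := by
    rintro T hT
    obtain ⟨X, hX, rfl⟩ := mem_image.1 hT
    rw [mem_filter] at hX
    refine mem_image.2 ⟨X.image (fun x => x⁻¹), mem_filter.2 ⟨C.inv_mem X hX.1, ?_⟩, ?_⟩
    · intro x hx
      obtain ⟨y, hy, rfl⟩ := mem_image.1 hx
      have := hX.2 hy
      rw [mem_filter] at this ⊢
      exact ⟨mem_univ _, P.inv_mem this.2⟩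
    · ext u
      constructor
      · intro h
        rw [Finset.mem_subtype] at h
        obtain ⟨x, hx, hxu⟩ := mem_image.1 h
        have hxP : x ∈ P := (mem_filter.1 (hX.2 hx)).2
        exact mem_image.2 ⟨⟨x, hxP⟩, Finset.mem_subtype.2 hx,
          Subtype.ext (by simpa using hxu)⟩
      · intro h
        obtain ⟨v, hv, rfl⟩ := mem_image.1 h
        rw [Finset.mem_subtype] at hv ⊢
        exact mem_image.2 ⟨(v : K), hv, rfl⟩
  structConst_eq := by
    rintro T hT T' hT' T'' hT'' z hz z' hz'
    obtain ⟨X, hX, rfl⟩ := mem_image.1 hT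
    obtain ⟨Y, hY, rfl⟩ := mem_image.1 hT'
    obtain ⟨Z, hZ, rfl⟩ := mem_image.1 hT''
    rw [mem_filter] at hX hY hZ
    have hXm : ∀ x ∈ X, x ∈ P := fun x hx => (mem_filter.1 (hX.2 hx)).2
    have hYm : ∀ y ∈ Y, y ∈ P := fun y hy => (mem_filter.1 (hY.2 hy)).2
    rw [structConst_subtype P hXm hYm, structConst_subtype P hXm hYm]
    exact C.structConst_eq X hX.1 Y hY.1 Z hZ.1 (z : K) (Finset.mem_subtype.1 hz)
      (z' : K) (Finset.mem_subtype.1 hz')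

end SubSR

section QuotSR

variable {K : Type*} [CommGroup K] [Fintype K] [DecidableEq K]
variable (N : Subgroup K) [DecidablePred (· ∈ N)]
variable [Fintype (K ⧸ N)] [DecidableEq (K ⧸ N)]

theorem quot_structConst_congr (C : SRing K) (hN : C.IsASet (Finset.univ.filter (· ∈ N)))
    {X Y Z : Finset K} (hX : X ∈ C.basicSets) (hY : Y ∈ C.basicSets)
    (hZ : Z ∈ C.basicSets) {z z'' : K} (hz : z ∈ Z) (hz'' : z'' ∈ Z) :
    structConst (qimg N X) (qimg N Y) (QuotientGroup.mk z)
      = structConst (qimg N X) (qimg N Y) (QuotientGroup.mk z'') := by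
  obtain ⟨x₀, hx₀⟩ := C.nonempty_mem X hX
  obtain ⟨y₀, hy₀⟩ := C.nonempty_mem Y hY
  have h1 := Tcard_eq C hN hX hY z hx₀ hy₀
  have h2 := Tcard_eq C hN hX hY z'' hx₀ hy₀
  have hT : Tcard N X Y z = Tcard N X Y z'' := by
    rw [Tcard_eq_sum C, Tcard_eq_sum C]
    refine Finset.sum_congr rfl fun W hW => ?_
    have hcard : kcount N W z = kcount N W z'' := kcount_congr C hN hW hZ hz hz''
    simp only [kcount] at hcard
    rcases Finset.eq_empty_or_nonempty
        (W.filter (fun a => (QuotientGroup.mk a : K ⧸ N) = QuotientGroup.mk z)) with he | hne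
    · have he' : (W.filter
          (fun a => (QuotientGroup.mk a : K ⧸ N) = QuotientGroup.mk z'')) = ∅ := by
        rw [← Finset.card_eq_zero, ← hcard, he, Finset.card_empty]
      rw [he, he']
    · obtain ⟨w₁, hw₁⟩ := hne
      have hw₁W := (mem_filter.1 hw₁).1
      calc ∑ w ∈ W.filter (fun a => (QuotientGroup.mk a : K ⧸ N) = QuotientGroup.mk z),
            structConst X Y w
          = ∑ _w ∈ W.filter (fun a => (QuotientGroup.mk a : K ⧸ N) = QuotientGroup.mk z),
            structConst X Y w₁ :=
            Finset.sum_congr rfl fun w hw =>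
              C.structConst_eq X hX Y hY W hW w (mem_filter.1 hw).1 w₁ hw₁W
        _ = ∑ _w ∈ W.filter (fun a => (QuotientGroup.mk a : K ⧸ N) = QuotientGroup.mk z''),
            structConst X Y w₁ := by rw [Finset.sum_const, Finset.sum_const, hcard]
        _ = ∑ w ∈ W.filter (fun a => (QuotientGroup.mk a : K ⧸ N) = QuotientGroup.mk z''),
            structConst X Y w :=
            Finset.sum_congr rfl fun w hw =>
              C.structConst_eq X hX Y hY W hW w₁ hw₁W w (mem_filter.1 hw).1
  rw [h1, h2] at hT
  have hkxpos : 0 < kcount N X x₀ := by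
    rw [← mem_qimg_iff_kcount_pos]; exact mem_qimg_mk hx₀
  have hkypos : 0 < kcount N Y y₀ := by
    rw [← mem_qimg_iff_kcount_pos]; exact mem_qimg_mk hy₀
  exact Nat.eq_of_mul_eq_mul_left (Nat.mul_pos hkxpos hkypos) hT

/-- The induced S-ring on the quotient by an `A`-subgroup. -/
def quotSR (C : SRing K) (hN : C.IsASet (Finset.univ.filter (· ∈ N))) : SRing (K ⧸ N) where
  basicSets := C.basicSets.image (fun X => X.image (fun g => (QuotientGroup.mk g : K ⧸ N)))
  nonempty_mem := by
    rintro Q hQ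
    obtain ⟨X, hX, rfl⟩ := mem_image.1 hQ
    obtain ⟨x, hx⟩ := C.nonempty_mem X hX
    exact ⟨QuotientGroup.mk x, mem_image.2 ⟨x, hx, rfl⟩⟩
  exists_mem := by
    intro q
    obtain ⟨g, rfl⟩ := QuotientGroup.mk_surjective q
    obtain ⟨X, hX, hg⟩ := C.exists_mem g
    exact ⟨X.image (fun g => (QuotientGroup.mk g : K ⧸ N)), mem_image.2 ⟨X, hX, rfl⟩,
      mem_image.2 ⟨g, hg, rfl⟩⟩
  disj := by
    rintro Q hQ Q' hQ' hne
    obtain ⟨X, hX, rfl⟩ := mem_image.1 hQ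
    obtain ⟨X', hX', rfl⟩ := mem_image.1 hQ'
    rw [Finset.disjoint_left]
    intro q hq hq'
    exact hne (qimg_eq_of_mem C hN hX hX' hq hq')
  one_mem := by
    refine mem_image.2 ⟨{1}, C.one_mem, ?_⟩
    rw [Finset.image_singleton]
    congr 1
  inv_mem := by
    rintro Q hQ
    obtain ⟨X, hX, rfl⟩ := mem_image.1 hQ
    refine mem_image.2 ⟨X.image (fun x => x⁻¹), C.inv_mem X hX, ?_⟩
    rw [Finset.image_image, Finset.image_image]
    congr 1
  structConst_eq := by
    rintro Q hQ Q' hQ' Q'' hQ'' q hq q' hq'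
    obtain ⟨X, hX, rfl⟩ := mem_image.1 hQ
    obtain ⟨Y, hY, hYimg⟩ := mem_image.1 hQ'
    obtain ⟨Z, hZ, rfl⟩ := mem_image.1 hQ''
    obtain ⟨z, hz, rfl⟩ := mem_image.1 hq
    obtain ⟨z'', hz'', rfl⟩ := mem_image.1 hq'
    rw [← hYimg]
    exact quot_structConst_congr N C hN hX hY hZ hz hz''

end QuotSR

section ImgSet

variable {K K' : Type*} [CommGroup K] [Fintype K] [DecidableEq K]
  [CommGroup K'] [Fintype K'] [DecidableEq K']
variable (C : SRing K) {C' : SRing K'} (φ : Finset K → Finset K')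

/-- The image of an `A`-set under an algebraic isomorphism. -/
def imgSet (M : Finset K) : Finset K' :=
  (C.basicSets.filter (fun X => X ⊆ M)).biUnion (fun X => φ X)

variable {C φ}

theorem mem_imgSet {M : Finset K} {h : K'} :
    h ∈ imgSet C φ M ↔ ∃ X ∈ C.basicSets, X ⊆ M ∧ h ∈ φ X := by
  simp only [imgSet, mem_biUnion, mem_filter]
  constructor
  · rintro ⟨X, ⟨hX, hXM⟩, hh⟩; exact ⟨X, hX, hXM, hh⟩
  · rintro ⟨X, hX, hXM, hh⟩; exact ⟨X, ⟨hX, hXM⟩, hh⟩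

theorem imgSet_ASet (hφ : C.IsAlgIso C' φ) {M : Finset K} : C'.IsASet (imgSet C φ M) := by
  intro Y hY ⟨y, hy⟩
  rw [mem_inter] at hy
  obtain ⟨X, hX, hXM, hyX⟩ := mem_imgSet.1 hy.2
  have : Y = φ X := C'.block_eq_of_mem hY (hφ.mem hX) hy.1 hyX
  subst this
  intro a ha
  exact mem_imgSet.2 ⟨X, hX, hXM, ha⟩

theorem imgSet_corr (hφ : C.IsAlgIso C' φ) {M : Finset K} {V : Finset K}
    (hV : V ∈ C.basicSets) (hM : C.IsASet M) : V ⊆ M ↔ φ V ⊆ imgSet C φ M := by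
  constructor
  · intro hVM a ha
    exact mem_imgSet.2 ⟨V, hV, hVM, ha⟩
  · intro hVM
    obtain ⟨v', hv'⟩ := hφ.nonempty hV
    obtain ⟨X, hX, hXM, hv'X⟩ := mem_imgSet.1 (hVM hv')
    have : φ V = φ X := C'.block_eq_of_mem (hφ.mem hV) (hφ.mem hX) hv' hv'X
    rw [hφ.inj hV hX this]
    exact hXM

theorem imgSet_subset (hφ : C.IsAlgIso C' φ) {M M₂ : Finset K} (h : M ⊆ M₂) :
    imgSet C φ M ⊆ imgSet C φ M₂ := by
  intro a ha
  obtain ⟨X, hX, hXM, haX⟩ := mem_imgSet.1 ha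
  exact mem_imgSet.2 ⟨X, hX, hXM.trans h, haX⟩

theorem imgSet_one (hφ : C.IsAlgIso C' φ) {M : Finset K} (h1 : (1 : K) ∈ M) :
    (1 : K') ∈ imgSet C φ M := by
  refine mem_imgSet.2 ⟨{1}, C.one_mem, ?_, ?_⟩
  · intro x hx; rw [Finset.mem_singleton] at hx; subst hx; exact h1
  · rw [hφ.map_one]; exact Finset.mem_singleton_self 1

theorem imgSet_inv (hφ : C.IsAlgIso C' φ) {M : Finset K}
    (hMinv : ∀ a ∈ M, a⁻¹ ∈ M) {a : K'} (ha : a ∈ imgSet C φ M) : a⁻¹ ∈ imgSet C φ M := by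
  obtain ⟨X, hX, hXM, haX⟩ := mem_imgSet.1 ha
  refine mem_imgSet.2 ⟨X.image (fun x => x⁻¹), C.inv_mem X hX, ?_, ?_⟩
  · intro x hx
    obtain ⟨y, hy, rfl⟩ := mem_image.1 hx
    exact hMinv y (hXM hy)
  · rw [hφ.map_inv hX]
    exact mem_image.2 ⟨a, haX, rfl⟩

theorem imgSet_mul (hφ : C.IsAlgIso C' φ) {M : Finset K} (hM : C.IsASet M)
    (hMmul : ∀ a ∈ M, ∀ b ∈ M, a * b ∈ M) {a b : K'}
    (ha : a ∈ imgSet C φ M) (hb : b ∈ imgSet C φ M) : a * b ∈ imgSet C φ M := by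
  obtain ⟨X, hX, hXM, haX⟩ := mem_imgSet.1 ha
  obtain ⟨Y, hY, hYM, hbY⟩ := mem_imgSet.1 hb
  obtain ⟨Z', hZ', hab⟩ := C'.exists_mem (a * b)
  obtain ⟨Z, hZ, rfl⟩ := hφ.surj hZ'
  obtain ⟨z, hz⟩ := C.nonempty_mem Z hZ
  have hpos : 0 < structConst (φ X) (φ Y) (a * b) :=
    structConst_pos.2 ⟨a, haX, b, hbY, rfl⟩
  rw [← hφ.2 X hX Y hY Z hZ z hz (a * b) hab] at hpos
  obtain ⟨x, hx, y, hy, hxy⟩ := structConst_pos.1 hpos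
  have hzM : z ∈ M := by rw [← hxy]; exact hMmul x (hXM hx) y (hYM hy)
  have hZM : Z ⊆ M := hM Z hZ ⟨z, mem_inter.2 ⟨hz, hzM⟩⟩
  exact mem_imgSet.2 ⟨Z, hZ, hZM, hab⟩

end ImgSet

end SRing
namespace SRing

open Finset

section Bridge

variable {K : Type*} [CommGroup K] [Fintype K] [DecidableEq K]
variable (P N : Subgroup K) [DecidablePred (· ∈ P)] (hNP : N ≤ P)

/-- The canonical injection of the section `P/N` into `K/N`. -/
noncomputable def secInc : ↥P ⧸ N.subgroupOf P →* K ⧸ N :=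
  QuotientGroup.map (N.subgroupOf P) N P.subtype (le_refl _)

theorem secInc_mk (u : ↥P) :
    secInc P N (QuotientGroup.mk u) = QuotientGroup.mk (u : K) := rfl

theorem secInc_injective : Function.Injective (secInc P N) := by
  intro a b h
  obtain ⟨u, rfl⟩ := QuotientGroup.mk_surjective a
  obtain ⟨v, rfl⟩ := QuotientGroup.mk_surjective b
  rw [secInc_mk, secInc_mk] at h
  rw [QuotientGroup.eq] at h ⊢
  rw [Subgroup.mem_subgroupOf]
  exact h

theorem secInc_mem_image_iff [DecidableEq (↥P ⧸ N.subgroupOf P)] [DecidableEq (K ⧸ N)]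
    {X : Finset K} (hXP : ∀ x ∈ X, x ∈ P)
    (ξ : ↥P ⧸ N.subgroupOf P) :
    ξ ∈ (X.subtype (· ∈ P)).image
        (fun u => (QuotientGroup.mk u : ↥P ⧸ N.subgroupOf P)) ↔
      secInc P N ξ ∈ X.image (fun g => (QuotientGroup.mk g : K ⧸ N)) := by
  obtain ⟨u, rfl⟩ := QuotientGroup.mk_surjective ξ
  constructor
  · intro h
    obtain ⟨t, ht, hmk⟩ := mem_image.1 h
    rw [Finset.mem_subtype] at ht
    refine mem_image.2 ⟨(t : K), ht, ?_⟩
    rw [secInc_mk, ← secInc_mk P N u, ← hmk, secInc_mk]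
  · intro h
    rw [secInc_mk] at h
    obtain ⟨x, hx, hmk⟩ := mem_image.1 h
    refine mem_image.2 ⟨⟨x, hXP x hx⟩, Finset.mem_subtype.2 hx, ?_⟩
    rw [QuotientGroup.eq] at hmk ⊢
    rw [Subgroup.mem_subgroupOf]
    exact hmk

end Bridge

end SRing

open Finset SRing

/-- Lemma on separability of S-wreath products: let `𝒜` be an S-ring over a finite abelian
group `G` which is the `S = U/L`-wreath product (i.e. `L ≤ rad(X)` for every basic set `X`
outside `U`), with `U`, `L` `𝒜`-subgroups, `L ≤ U`. If `𝒜_U` and `𝒜_{G/L}` are separable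
(w.r.t. finite abelian groups) and `Aut(𝒜_U)^S = Aut(𝒜_S)`, then `𝒜` is separable. -/
theorem stmt8 (G : Type) [CommGroup G] [Fintype G] [DecidableEq G]
    (A : SRing G) (U L : Subgroup G) [DecidablePred (· ∈ U)] [DecidablePred (· ∈ L)]
    (hLU : L ≤ U)
    (hUA : A.IsASet (Finset.univ.filter (· ∈ U)))
    (hLA : A.IsASet (Finset.univ.filter (· ∈ L)))
    (hwr : ∀ X ∈ A.basicSets, ¬ X ⊆ Finset.univ.filter (· ∈ U) →
      ∀ l ∈ L, ∀ x ∈ X, l * x ∈ X)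
    [Fintype (G ⧸ L)] [DecidableEq (G ⧸ L)]
    [Fintype (↥U ⧸ L.subgroupOf U)] [DecidableEq (↥U ⧸ L.subgroupOf U)]
    (AU : SRing ↥U)
    (hAU : AU.basicSets =
      (A.basicSets.filter (fun X => X ⊆ Finset.univ.filter (· ∈ U))).image
        (Finset.subtype (· ∈ U)))
    (AGL : SRing (G ⧸ L))
    (hAGL : AGL.basicSets =
      A.basicSets.image (fun X => X.image (fun g => (QuotientGroup.mk g : G ⧸ L))))
    (AS : SRing (↥U ⧸ L.subgroupOf U))
    (hAS : AS.basicSets =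
      AU.basicSets.image (fun X =>
        X.image (fun u => (QuotientGroup.mk u : ↥U ⧸ L.subgroupOf U))))
    (hsepU : AU.SeparableA) (hsepGL : AGL.SeparableA)
    (hautEq : sectionAut (L.subgroupOf U) (AU.autPerm : Set (Equiv.Perm ↥U)) =
      (AS.autPerm : Set (Equiv.Perm (↥U ⧸ L.subgroupOf U)))) :
    A.SeparableA := by
  classical
  intro H _instCG _instFT _instDE B φ hφ
  set Ufin : Finset G := Finset.univ.filter (· ∈ U) with hUfin
  set Lfin : Finset G := Finset.univ.filter (· ∈ L) with hLfin
  have hmemUfin : ∀ {x : G}, x ∈ Ufin ↔ x ∈ U := by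
    intro x; rw [hUfin, Finset.mem_filter]; simp
  have hmemLfin : ∀ {x : G}, x ∈ Lfin ↔ x ∈ L := by
    intro x; rw [hLfin, Finset.mem_filter]; simp
  have hLsubU : Lfin ⊆ Ufin := fun x hx => hmemUfin.2 (hLU (hmemLfin.1 hx))
  -- the image subgroups
  set U'fin : Finset H := imgSet A φ Ufin with hU'fin
  set L'fin : Finset H := imgSet A φ Lfin with hL'fin
  have hU'set : B.IsASet U'fin := imgSet_ASet hφ
  have hL'set : B.IsASet L'fin := imgSet_ASet hφ
  let U' : Subgroup H :=
    { carrier := ↑U'fin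
      mul_mem' := fun ha hb => imgSet_mul hφ hUA
        (fun a ha b hb => hmemUfin.2 (U.mul_mem (hmemUfin.1 ha) (hmemUfin.1 hb))) ha hb
      one_mem' := imgSet_one hφ (hmemUfin.2 U.one_mem)
      inv_mem' := fun ha => imgSet_inv hφ
        (fun a ha => hmemUfin.2 (U.inv_mem (hmemUfin.1 ha))) ha }
  let L' : Subgroup H :=
    { carrier := ↑L'fin
      mul_mem' := fun ha hb => imgSet_mul hφ hLA
        (fun a ha b hb => hmemLfin.2 (L.mul_mem (hmemLfin.1 ha) (hmemLfin.1 hb))) ha hb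
      one_mem' := imgSet_one hφ (hmemLfin.2 L.one_mem)
      inv_mem' := fun ha => imgSet_inv hφ
        (fun a ha => hmemLfin.2 (L.inv_mem (hmemLfin.1 ha))) ha }
  have hmemU' : ∀ {x : H}, x ∈ U' ↔ x ∈ U'fin := fun {x} => Iff.rfl
  have hmemL' : ∀ {x : H}, x ∈ L' ↔ x ∈ L'fin := fun {x} => Iff.rfl
  have hL'U' : L' ≤ U' := fun x hx => hmemU'.2 (imgSet_subset hφ hLsubU (hmemL'.1 hx))
  haveI hdecU' : DecidablePred (· ∈ U') := fun x => decidable_of_iff (x ∈ U'fin) hmemU'.symm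
  haveI hdecL' : DecidablePred (· ∈ L') := fun x => decidable_of_iff (x ∈ L'fin) hmemL'.symm
  have hU'filter : Finset.univ.filter (· ∈ U') = U'fin := by
    ext x
    simp only [Finset.mem_filter, Finset.mem_univ, true_and]
    exact hmemU'
  have hL'filter : Finset.univ.filter (· ∈ L') = L'fin := by
    ext x
    simp only [Finset.mem_filter, Finset.mem_univ, true_and]
    exact hmemL'
  have hU'setF : B.IsASet (Finset.univ.filter (· ∈ U')) := by
    rw [hU'filter]; exact hU'set
  have hL'setF : B.IsASet (Finset.univ.filter (· ∈ L')) := by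
    rw [hL'filter]; exact hL'set
  -- quotient instances on the H-side
  haveI hdeqHL' : DecidableEq (H ⧸ L') := fun a b =>
    Quotient.recOnSubsingleton₂ a b (fun x y =>
      decidable_of_iff (x⁻¹ * y ∈ L') (QuotientGroup.eq).symm)
  haveI : Fintype (H ⧸ L') := Quotient.fintype _
  -- the sub-S-ring over U' and the quotient S-ring over H/L'
  let BU' : SRing ↥U' := B.subSR (P := U') hU'setF
  let Bq : SRing (H ⧸ L') := B.quotSR (N := L') hL'setF
  -- quotient transfer context for (A, B, L, L')
  have hcorrL : ∀ V ∈ A.basicSets,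
      (V ⊆ Finset.univ.filter (· ∈ L) ↔ φ V ⊆ Finset.univ.filter (· ∈ L')) := by
    intro V hV
    rw [hL'filter]
    exact imgSet_corr hφ hV hLA
  have qc1 : A.QuotCtx B L L' φ := ⟨hφ, hLA, hL'setF, hcorrL⟩
  have hcorrU : ∀ V ∈ A.basicSets, (V ⊆ Ufin ↔ φ V ⊆ U'fin) := by
    intro V hV
    exact imgSet_corr hφ hV hUA
  -- the quotient algebraic isomorphism
  let φbar : Finset (G ⧸ L) → Finset (H ⧸ L') := fun Q =>
    if hq : ∃ X, X ∈ A.basicSets ∧ qimg L X = Q then qimg L' (φ hq.choose) else ∅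
  have hφbar : ∀ X ∈ A.basicSets, φbar (qimg L X) = qimg L' (φ X) := by
    intro X hX
    have hex : ∃ X₀, X₀ ∈ A.basicSets ∧ qimg L X₀ = qimg L X := ⟨X, hX, rfl⟩
    show (if hq : _ then _ else _) = _
    rw [dif_pos hex]
    exact qc1.qimg_eq_pres hex.choose_spec.1 hX hex.choose_spec.2
  have hAGLmem : ∀ {Q}, Q ∈ AGL.basicSets ↔ ∃ X ∈ A.basicSets, qimg L X = Q := by
    intro Q; rw [hAGL]; exact Finset.mem_image
  have hBqmem : ∀ {Q' : Finset (H ⧸ L')},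
      Q' ∈ Bq.basicSets ↔ ∃ Y ∈ B.basicSets, qimg L' Y = Q' := by
    intro Q'
    show Q' ∈ B.basicSets.image _ ↔ _
    exact Finset.mem_image
  have halgbar : AGL.IsAlgIso Bq φbar := by
    constructor
    · refine ⟨?_, ?_, ?_⟩
      · intro Q hQ
        obtain ⟨X, hX, rfl⟩ := hAGLmem.1 hQ
        rw [Finset.mem_coe] at *
        rw [hφbar X hX]
        exact hBqmem.2 ⟨φ X, hφ.mem hX, rfl⟩
      · intro Q hQ Q₂ hQ₂ heq
        rw [Finset.mem_coe] at hQ hQ₂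
        obtain ⟨X, hX, rfl⟩ := hAGLmem.1 hQ
        obtain ⟨X₂, hX₂, rfl⟩ := hAGLmem.1 hQ₂
        rw [hφbar X hX, hφbar X₂ hX₂] at heq
        exact qc1.qimg_eq_pres' hX hX₂ heq
      · intro Q' hQ'
        rw [Finset.mem_coe] at hQ'
        obtain ⟨Y, hY, rfl⟩ := hBqmem.1 hQ'
        obtain ⟨X, hX, rfl⟩ := hφ.surj hY
        exact ⟨qimg L X, Finset.mem_coe.2 (hAGLmem.2 ⟨X, hX, rfl⟩), hφbar X hX⟩
    · intro Q1 hQ1 Q2 hQ2 Q3 hQ3 q hq q' hq'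
      obtain ⟨X, hX, rfl⟩ := hAGLmem.1 hQ1
      obtain ⟨Y, hY, rfl⟩ := hAGLmem.1 hQ2
      obtain ⟨Z, hZ, rfl⟩ := hAGLmem.1 hQ3
      rw [hφbar X hX, hφbar Y hY]
      rw [hφbar Z hZ] at hq'
      obtain ⟨z, hz, rfl⟩ := Finset.mem_image.1 hq
      obtain ⟨z', hz', rfl⟩ := Finset.mem_image.1 hq'
      exact qc1.quot_structConst_pres hX hY hZ hz hz'
  obtain ⟨fbar, hfbarBij, hfbarInd⟩ := hsepGL (H ⧸ L') Bq φbar halgbar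
  -- the subgroup-level algebraic isomorphism
  have hAUmem : ∀ {T}, T ∈ AU.basicSets ↔
      ∃ X, X ∈ A.basicSets ∧ X ⊆ Ufin ∧ Finset.subtype (· ∈ U) X = T := by
    intro T
    rw [hAU]
    constructor
    · intro h
      obtain ⟨X, hX, rfl⟩ := Finset.mem_image.1 h
      rw [Finset.mem_filter] at hX
      exact ⟨X, hX.1, hX.2, rfl⟩
    · rintro ⟨X, hX, hXU, rfl⟩
      exact Finset.mem_image.2 ⟨X, Finset.mem_filter.2 ⟨hX, hXU⟩, rfl⟩
  have hmapval : ∀ {X : Finset G}, X ⊆ Ufin →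
      (X.subtype (· ∈ U)).map (Function.Embedding.subtype (· ∈ U)) = X := by
    intro X hXU
    rw [Finset.subtype_map]
    exact Finset.filter_true_of_mem (fun x hx => hmemUfin.1 (hXU hx))
  have hmapval' : ∀ {Y : Finset H}, Y ⊆ U'fin →
      (Y.subtype (· ∈ U')).map (Function.Embedding.subtype (· ∈ U')) = Y := by
    intro Y hYU
    rw [Finset.subtype_map]
    exact Finset.filter_true_of_mem (fun y hy => hmemU'.2 (hYU hy))
  let φU : Finset ↥U → Finset ↥U' := fun T =>
    (φ (T.map (Function.Embedding.subtype (· ∈ U)))).subtype (· ∈ U')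
  have hφU : ∀ {X : Finset G}, X ⊆ Ufin →
      φU (X.subtype (· ∈ U)) = (φ X).subtype (· ∈ U') := by
    intro X hXU
    show (φ ((X.subtype (· ∈ U)).map (Function.Embedding.subtype (· ∈ U)))).subtype _ = _
    rw [hmapval hXU]
  have hBU'mem : ∀ {T' : Finset ↥U'}, T' ∈ BU'.basicSets ↔
      ∃ Y, Y ∈ B.basicSets ∧ Y ⊆ U'fin ∧ Finset.subtype (· ∈ U') Y = T' := by
    intro T'
    show T' ∈ (B.basicSets.filter _).image _ ↔ _
    constructor
    · intro h
      obtain ⟨Y, hY, rfl⟩ := Finset.mem_image.1 h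
      rw [Finset.mem_filter] at hY
      exact ⟨Y, hY.1, by rw [← hU'filter]; exact hY.2, rfl⟩
    · rintro ⟨Y, hY, hYU, rfl⟩
      exact Finset.mem_image.2 ⟨Y, Finset.mem_filter.2 ⟨hY, by rw [hU'filter]; exact hYU⟩, rfl⟩
  have halgU : AU.IsAlgIso BU' φU := by
    constructor
    · refine ⟨?_, ?_, ?_⟩
      · intro T hT
        rw [Finset.mem_coe] at *
        obtain ⟨X, hX, hXU, rfl⟩ := hAUmem.1 hT
        rw [hφU hXU]
        exact hBU'mem.2 ⟨φ X, hφ.mem hX, (hcorrU X hX).1 hXU, rfl⟩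
      · intro T hT T₂ hT₂ heq
        rw [Finset.mem_coe] at hT hT₂
        obtain ⟨X, hX, hXU, rfl⟩ := hAUmem.1 hT
        obtain ⟨X₂, hX₂, hXU₂, rfl⟩ := hAUmem.1 hT₂
        rw [hφU hXU, hφU hXU₂] at heq
        have : φ X = φ X₂ := by
          rw [← hmapval' ((hcorrU X hX).1 hXU), ← hmapval' ((hcorrU X₂ hX₂).1 hXU₂), heq]
        rw [hφ.inj hX hX₂ this]
      · intro T' hT'
        rw [Finset.mem_coe] at hT'
        obtain ⟨Y, hY, hYU, rfl⟩ := hBU'mem.1 hT'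
        obtain ⟨X, hX, rfl⟩ := hφ.surj hY
        have hXU : X ⊆ Ufin := (hcorrU X hX).2 hYU
        exact ⟨X.subtype (· ∈ U), Finset.mem_coe.2 (hAUmem.2 ⟨X, hX, hXU, rfl⟩), hφU hXU⟩
    · intro T1 hT1 T2 hT2 T3 hT3 z hz z' hz'
      obtain ⟨X, hX, hXU, rfl⟩ := hAUmem.1 hT1
      obtain ⟨Y, hY, hYU, rfl⟩ := hAUmem.1 hT2
      obtain ⟨Z, hZ, hZU, rfl⟩ := hAUmem.1 hT3
      rw [hφU hXU, hφU hYU]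
      rw [hφU hZU] at hz'
      rw [structConst_subtype U (fun x hx => hmemUfin.1 (hXU hx))
        (fun y hy => hmemUfin.1 (hYU hy)),
        structConst_subtype U' (fun x hx => hmemU'.2 (((hcorrU X hX).1 hXU) hx))
        (fun y hy => hmemU'.2 (((hcorrU Y hY).1 hYU) hy))]
      exact hφ.2 X hX Y hY Z hZ _ (Finset.mem_subtype.1 hz) _ (Finset.mem_subtype.1 hz')
  obtain ⟨fU, hfUBij, hfUInd⟩ := hsepU ↥U' BU' φU halgU
  -- instances for the sections
  haveI hdecLU : DecidablePred (· ∈ L.subgroupOf U) := fun u =>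
    decidable_of_iff ((u : G) ∈ L) (Subgroup.mem_subgroupOf).symm
  haveI hdecLU' : DecidablePred (· ∈ L'.subgroupOf U') := fun u =>
    decidable_of_iff ((u : H) ∈ L') (Subgroup.mem_subgroupOf).symm
  haveI : DecidableEq (↥U' ⧸ L'.subgroupOf U') := fun a b =>
    Quotient.recOnSubsingleton₂ a b (fun x y =>
      decidable_of_iff (x⁻¹ * y ∈ L'.subgroupOf U') (QuotientGroup.eq).symm)
  haveI : Fintype (↥U' ⧸ L'.subgroupOf U') := Quotient.fintype _
  have hcorrL2 : ∀ V ∈ A.basicSets, (V ⊆ Lfin ↔ φ V ⊆ L'fin) := by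
    intro V hV
    exact imgSet_corr hφ hV hLA
  have hNU : AU.IsASet (Finset.univ.filter (· ∈ L.subgroupOf U)) := by
    rintro T hT ⟨u, hu⟩
    rw [Finset.mem_inter] at hu
    obtain ⟨X, hX, hXU, rfl⟩ := hAUmem.1 hT
    have huX : (u : G) ∈ X := Finset.mem_subtype.1 hu.1
    have huL : (u : G) ∈ Lfin :=
      hmemLfin.2 (Subgroup.mem_subgroupOf.1 ((Finset.mem_filter.1 hu.2).2))
    have hXL : X ⊆ Lfin := hLA X hX ⟨(u : G), Finset.mem_inter.2 ⟨huX, huL⟩⟩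
    intro v hv
    rw [Finset.mem_filter]
    exact ⟨Finset.mem_univ _,
      Subgroup.mem_subgroupOf.2 (hmemLfin.1 (hXL (Finset.mem_subtype.1 hv)))⟩
  have hNU' : BU'.IsASet (Finset.univ.filter (· ∈ L'.subgroupOf U')) := by
    rintro T hT ⟨u, hu⟩
    rw [Finset.mem_inter] at hu
    obtain ⟨Y, hY, hYU, rfl⟩ := hBU'mem.1 hT
    have huY : (u : H) ∈ Y := Finset.mem_subtype.1 hu.1
    have huL : (u : H) ∈ L'fin :=
      hmemL'.1 (Subgroup.mem_subgroupOf.1 ((Finset.mem_filter.1 hu.2).2))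
    have hYL : Y ⊆ L'fin := hL'set Y hY ⟨(u : H), Finset.mem_inter.2 ⟨huY, huL⟩⟩
    intro v hv
    rw [Finset.mem_filter]
    exact ⟨Finset.mem_univ _,
      Subgroup.mem_subgroupOf.2 (hmemL'.2 (hYL (Finset.mem_subtype.1 hv)))⟩
  have hcorrLU : ∀ T ∈ AU.basicSets,
      (T ⊆ Finset.univ.filter (· ∈ L.subgroupOf U) ↔
        φU T ⊆ Finset.univ.filter (· ∈ L'.subgroupOf U')) := by
    intro T hT
    obtain ⟨X, hX, hXU, rfl⟩ := hAUmem.1 hT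
    rw [hφU hXU]
    constructor
    · intro h
      have hXL : X ⊆ Lfin := by
        intro x hx
        have hx2 := h (show (⟨x, hmemUfin.1 (hXU hx)⟩ : ↥U) ∈ X.subtype (· ∈ U) from
          Finset.mem_subtype.2 hx)
        rw [Finset.mem_filter] at hx2
        exact hmemLfin.2 (Subgroup.mem_subgroupOf.1 hx2.2)
      have hφXL : φ X ⊆ L'fin := (hcorrL2 X hX).1 hXL
      intro y' hy'
      rw [Finset.mem_filter]
      exact ⟨Finset.mem_univ _,
        Subgroup.mem_subgroupOf.2 (hmemL'.2 (hφXL (Finset.mem_subtype.1 hy')))⟩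
    · intro h
      have hφXL : φ X ⊆ L'fin := by
        intro y hy
        have hyU' : y ∈ U'fin := (hcorrU X hX).1 hXU hy
        have hy2 := h (show (⟨y, hmemU'.2 hyU'⟩ : ↥U') ∈ (φ X).subtype (· ∈ U') from
          Finset.mem_subtype.2 hy)
        rw [Finset.mem_filter] at hy2
        exact hmemL'.1 (Subgroup.mem_subgroupOf.1 hy2.2)
      have hXL : X ⊆ Lfin := (hcorrL2 X hX).2 hφXL
      intro u hu
      rw [Finset.mem_filter]
      exact ⟨Finset.mem_univ _,
        Subgroup.mem_subgroupOf.2 (hmemLfin.1 (hXL (Finset.mem_subtype.1 hu)))⟩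
  have qc2 : AU.QuotCtx BU' (L.subgroupOf U) (L'.subgroupOf U') φU :=
    ⟨halgU, hNU, hNU', hcorrLU⟩
  -- fU respects the L-cosets, hence descends to the sections
  have hfUcoset : ∀ u v : ↥U, u⁻¹ * v ∈ L.subgroupOf U →
      (fU u)⁻¹ * fU v ∈ L'.subgroupOf U' := by
    intro u v huv
    obtain ⟨T₁, hT₁, hmem⟩ := AU.exists_mem (v * u⁻¹)
    have hT₁L : T₁ ⊆ Finset.univ.filter (· ∈ L.subgroupOf U) := by
      refine hNU T₁ hT₁ ⟨v * u⁻¹, Finset.mem_inter.2 ⟨hmem,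
        Finset.mem_filter.2 ⟨Finset.mem_univ _, by rw [mul_comm]; exact huv⟩⟩⟩
    have h2 : fU v * (fU u)⁻¹ ∈ φU T₁ := (hfUInd T₁ hT₁ u v).1 hmem
    have h3 := (hcorrLU T₁ hT₁).1 hT₁L h2
    rw [Finset.mem_filter] at h3
    rw [mul_comm]
    exact h3.2
  let fUS : (↥U ⧸ L.subgroupOf U) → (↥U' ⧸ L'.subgroupOf U') := fun t =>
    Quotient.liftOn' t
      (fun u => (QuotientGroup.mk (fU u) : ↥U' ⧸ L'.subgroupOf U'))
      (fun u v h => by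
        rw [QuotientGroup.leftRel_apply] at h
        exact QuotientGroup.eq.2 (hfUcoset u v h))
  have hfUSmk : ∀ u : ↥U, fUS (QuotientGroup.mk u) = QuotientGroup.mk (fU u) :=
    fun u => rfl
  have hfUSsurj : Function.Surjective fUS := by
    intro t'
    obtain ⟨s', rfl⟩ := QuotientGroup.mk_surjective t'
    obtain ⟨u, rfl⟩ := hfUBij.2 s'
    exact ⟨QuotientGroup.mk u, rfl⟩
  have hS1 : ∀ T ∈ AU.basicSets, ∀ a b : ↥U ⧸ L.subgroupOf U,
      (a * b⁻¹ ∈ qimg (L.subgroupOf U) T ↔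
       fUS a * (fUS b)⁻¹ ∈ qimg (L'.subgroupOf U') (φU T)) := by
    intro T hT a b
    obtain ⟨u, rfl⟩ := QuotientGroup.mk_surjective a
    obtain ⟨v, rfl⟩ := QuotientGroup.mk_surjective b
    obtain ⟨T₂, hT₂, hw⟩ := AU.exists_mem (u * v⁻¹)
    have hw' : fU u * (fU v)⁻¹ ∈ φU T₂ := (hfUInd T₂ hT₂ v u).1 hw
    have hkey := qc2.mem_qimg_pres (W := T) hT hT₂ hw hw'
    have e1 : (QuotientGroup.mk u : ↥U ⧸ L.subgroupOf U) * (QuotientGroup.mk v)⁻¹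
        = QuotientGroup.mk (u * v⁻¹) := by
      rw [QuotientGroup.mk_mul, QuotientGroup.mk_inv]
    have e2 : fUS (QuotientGroup.mk u) * (fUS (QuotientGroup.mk v))⁻¹
        = (QuotientGroup.mk (fU u * (fU v)⁻¹) : ↥U' ⧸ L'.subgroupOf U') := by
      rw [hfUSmk, hfUSmk, QuotientGroup.mk_mul, QuotientGroup.mk_inv]
    rw [e1, e2]
    exact hkey
  have hpexists : ∀ c : G, ∃ p : Equiv.Perm ↥U,
      (∀ T ∈ AU.basicSets, ∀ u v : ↥U, v * u⁻¹ ∈ T ↔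
        fU (p v) * (fU (p u))⁻¹ ∈ φU T) ∧
      (∀ u : ↥U, secInc U' L' (QuotientGroup.mk (fU (p u)))
        = fbar (QuotientGroup.mk ((u : G) * c)) * (fbar (QuotientGroup.mk c))⁻¹) := by
    intro c
    have hrange : ∀ t : ↥U ⧸ L.subgroupOf U, ∃ s : ↥U' ⧸ L'.subgroupOf U',
        secInc U' L' s
          = fbar (secInc U L t * QuotientGroup.mk c) * (fbar (QuotientGroup.mk c))⁻¹ := by
      intro t
      obtain ⟨u, rfl⟩ := QuotientGroup.mk_surjective t
      obtain ⟨X, hX, huX⟩ := A.exists_mem (u : G)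
      have hXU : X ⊆ Ufin :=
        hUA X hX ⟨(u : G), Finset.mem_inter.2 ⟨huX, hmemUfin.2 u.2⟩⟩
      have hQ : qimg L X ∈ AGL.basicSets := hAGLmem.2 ⟨X, hX, rfl⟩
      have hin : (QuotientGroup.mk ((u : G) * c) : G ⧸ L) * (QuotientGroup.mk c)⁻¹
          ∈ qimg L X := by
        have : (QuotientGroup.mk ((u : G) * c) : G ⧸ L) * (QuotientGroup.mk c)⁻¹
            = QuotientGroup.mk (u : G) := by rw [QuotientGroup.mk_mul]; group
        rw [this]
        exact mem_qimg_mk huX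
      have hmain := (hfbarInd (qimg L X) hQ (QuotientGroup.mk c)
        (QuotientGroup.mk ((u : G) * c))).1 hin
      rw [hφbar X hX] at hmain
      obtain ⟨x', hx', hmk⟩ := Finset.mem_image.1 hmain
      have hx'U : x' ∈ U' := hmemU'.2 ((hcorrU X hX).1 hXU hx')
      refine ⟨QuotientGroup.mk ⟨x', hx'U⟩, ?_⟩
      rw [secInc_mk, secInc_mk, ← QuotientGroup.mk_mul]
      exact hmk
    choose τ hτ using hrange
    have hS2 : ∀ T ∈ AU.basicSets, ∀ a b : ↥U ⧸ L.subgroupOf U,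
        (a * b⁻¹ ∈ qimg (L.subgroupOf U) T ↔
         τ a * (τ b)⁻¹ ∈ qimg (L'.subgroupOf U') (φU T)) := by
      intro T hT a b
      obtain ⟨X, hX, hXU, rfl⟩ := hAUmem.1 hT
      have hXP : ∀ x ∈ X, x ∈ U := fun x hx => hmemUfin.1 (hXU hx)
      have hXP' : ∀ y ∈ φ X, y ∈ U' := fun y hy => hmemU'.2 ((hcorrU X hX).1 hXU hy)
      have step1 : a * b⁻¹ ∈ qimg (L.subgroupOf U) (X.subtype (· ∈ U)) ↔
          secInc U L (a * b⁻¹) ∈ qimg L X := by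
        rw [qimg_def, qimg_def]
        exact secInc_mem_image_iff U L hXP (a * b⁻¹)
      have hQ : qimg L X ∈ AGL.basicSets := hAGLmem.2 ⟨X, hX, rfl⟩
      have step2 := hfbarInd (qimg L X) hQ (secInc U L b * QuotientGroup.mk c)
        (secInc U L a * QuotientGroup.mk c)
      have e2 : (secInc U L a * QuotientGroup.mk c) *
          (secInc U L b * QuotientGroup.mk c)⁻¹ = secInc U L (a * b⁻¹) := by
        rw [map_mul, map_inv]; group
      have e3 : fbar (secInc U L a * QuotientGroup.mk c) *
          (fbar (secInc U L b * QuotientGroup.mk c))⁻¹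
          = secInc U' L' (τ a * (τ b)⁻¹) := by
        rw [map_mul, map_inv, hτ a, hτ b]; group
      have step3 : τ a * (τ b)⁻¹ ∈ qimg (L'.subgroupOf U') ((φ X).subtype (· ∈ U')) ↔
          secInc U' L' (τ a * (τ b)⁻¹) ∈ qimg L' (φ X) := by
        rw [qimg_def, qimg_def]
        exact secInc_mem_image_iff U' L' hXP' (τ a * (τ b)⁻¹)
      rw [hφU hXU]
      rw [step1, ← e2, step2, hφbar X hX, e3, step3]
    have hτinj : Function.Injective τ := by
      intro a b h
      have h1 : secInc U' L' (τ a) = secInc U' L' (τ b) := by rw [h]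
      rw [hτ a, hτ b] at h1
      have h2 := mul_right_cancel h1
      have h3 := hfbarBij.1 h2
      have h4 := mul_right_cancel h3
      exact secInc_injective U L h4
    let σ : (↥U ⧸ L.subgroupOf U) → (↥U ⧸ L.subgroupOf U) :=
      fun t => Function.invFun fUS (τ t)
    have hfUSσ : ∀ t, fUS (σ t) = τ t :=
      fun t => Function.rightInverse_invFun hfUSsurj (τ t)
    have hσinj : Function.Injective σ := by
      intro a b h
      exact hτinj (by rw [← hfUSσ a, ← hfUSσ b, h])
    have hσbij : Function.Bijective σ := Finite.injective_iff_bijective.1 hσinj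
    have hσAut : Equiv.ofBijective σ hσbij ∈
        (AS.autPerm : Set (Equiv.Perm (↥U ⧸ L.subgroupOf U))) := by
      rw [SetLike.mem_coe]
      show ∀ Q ∈ AS.basicSets, ∀ g h : ↥U ⧸ L.subgroupOf U,
        h * g⁻¹ ∈ Q ↔ (Equiv.ofBijective σ hσbij) h * ((Equiv.ofBijective σ hσbij) g)⁻¹ ∈ Q
      intro Q hQ g h
      rw [hAS] at hQ
      obtain ⟨T, hT, rfl⟩ := Finset.mem_image.1 hQ
      have c1 := hS2 T hT h g
      have c2 := hS1 T hT (σ h) (σ g)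
      rw [hfUSσ, hfUSσ] at c2
      exact c1.trans c2.symm
    rw [← hautEq] at hσAut
    obtain ⟨pf, hpfAut, -, hpfσ⟩ := hσAut
    have hpfAut' : ∀ X ∈ AU.basicSets, ∀ g h : ↥U,
        h * g⁻¹ ∈ X ↔ pf h * (pf g)⁻¹ ∈ X := hpfAut
    refine ⟨pf, ?_, ?_⟩
    · intro T hT u v
      exact (hpfAut' T hT u v).trans (hfUInd T hT (pf u) (pf v))
    · intro u
      have h1 : (QuotientGroup.mk (fU (pf u)) : ↥U' ⧸ L'.subgroupOf U')
          = fUS (σ (QuotientGroup.mk u)) := by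
        rw [← hfUSmk]
        congr 1
        rw [← hpfσ u]
        rfl
      rw [h1, hfUSσ, hτ, secInc_mk, ← QuotientGroup.mk_mul]
  -- choose the section permutations for each U-coset
  have hp : ∀ q : G ⧸ U, ∃ p : Equiv.Perm ↥U,
      (∀ T ∈ AU.basicSets, ∀ u v : ↥U, v * u⁻¹ ∈ T ↔
        fU (p v) * (fU (p u))⁻¹ ∈ φU T) ∧
      (∀ u : ↥U, secInc U' L' (QuotientGroup.mk (fU (p u)))
        = fbar (QuotientGroup.mk ((u : G) * q.out)) *
            (fbar (QuotientGroup.mk q.out))⁻¹) :=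
    fun q => hpexists q.out
  choose pfun hp1 hp2 using hp
  have hUiff : ∀ a b : G, (a * b⁻¹ ∈ U ↔
      ((QuotientGroup.mk a : G ⧸ U) = QuotientGroup.mk b)) := by
    intro a b
    rw [eq_comm, QuotientGroup.eq, mul_comm]
  have houtU : ∀ x : G,
      (QuotientGroup.mk ((QuotientGroup.mk x : G ⧸ U).out) : G ⧸ U)
        = QuotientGroup.mk x := fun x => Quotient.out_eq _
  have hmemUx : ∀ x : G, x * ((QuotientGroup.mk x : G ⧸ U).out)⁻¹ ∈ U :=
    fun x => (hUiff x _).2 (houtU x).symm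
  let uOf : G → ↥U := fun x => ⟨x * ((QuotientGroup.mk x : G ⧸ U).out)⁻¹, hmemUx x⟩
  let F : G → H := fun x =>
    ((fU (pfun (QuotientGroup.mk x) (uOf x)) : ↥U') : H) *
      (fbar (QuotientGroup.mk ((QuotientGroup.mk x : G ⧸ U).out))).out
  have hFmk : ∀ x : G, (QuotientGroup.mk (F x) : H ⧸ L') = fbar (QuotientGroup.mk x) := by
    intro x
    show (QuotientGroup.mk (_ * _) : H ⧸ L') = _
    rw [QuotientGroup.mk_mul]
    have h1 : (QuotientGroup.mk ((fU (pfun (QuotientGroup.mk x) (uOf x)) : ↥U') : H) : H ⧸ L')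
        = secInc U' L' (QuotientGroup.mk (fU (pfun (QuotientGroup.mk x) (uOf x)))) :=
      (secInc_mk U' L' _).symm
    have h2 : (QuotientGroup.mk
        ((fbar (QuotientGroup.mk ((QuotientGroup.mk x : G ⧸ U).out))).out) : H ⧸ L')
        = fbar (QuotientGroup.mk ((QuotientGroup.mk x : G ⧸ U).out)) := Quotient.out_eq _
    rw [h1, hp2, h2]
    have h3 : ((uOf x : G)) * (QuotientGroup.mk x : G ⧸ U).out = x := by
      show x * ((QuotientGroup.mk x : G ⧸ U).out)⁻¹ * _ = x
      group
    rw [h3]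
    group
  have hFinj : Function.Injective F := by
    intro x y hxy
    have h1 : fbar (QuotientGroup.mk x) = fbar (QuotientGroup.mk y) := by
      rw [← hFmk, ← hFmk, hxy]
    have h2 : (QuotientGroup.mk x : G ⧸ L) = QuotientGroup.mk y := hfbarBij.1 h1
    have h3 : (QuotientGroup.mk x : G ⧸ U) = QuotientGroup.mk y := by
      rw [QuotientGroup.eq] at h2 ⊢
      exact hLU h2
    have h5 : (QuotientGroup.mk x : G ⧸ U).out = (QuotientGroup.mk y : G ⧸ U).out := by
      rw [h3]
    have h6 : ((fU (pfun (QuotientGroup.mk x) (uOf x)) : ↥U') : H)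
        = ((fU (pfun (QuotientGroup.mk y) (uOf y)) : ↥U') : H) := by
      have hxy' : ((fU (pfun (QuotientGroup.mk x) (uOf x)) : ↥U') : H) *
          (fbar (QuotientGroup.mk ((QuotientGroup.mk x : G ⧸ U).out))).out
          = ((fU (pfun (QuotientGroup.mk y) (uOf y)) : ↥U') : H) *
          (fbar (QuotientGroup.mk ((QuotientGroup.mk y : G ⧸ U).out))).out := hxy
      rw [← h5] at hxy'
      exact mul_right_cancel hxy'
    have h7 : fU (pfun (QuotientGroup.mk x) (uOf x))
        = fU (pfun (QuotientGroup.mk y) (uOf y)) := Subtype.coe_injective h6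
    rw [h3] at h7
    have h8 : pfun (QuotientGroup.mk y) (uOf x) = pfun (QuotientGroup.mk y) (uOf y) :=
      hfUBij.1 h7
    have h9 : uOf x = uOf y := (pfun (QuotientGroup.mk y)).injective h8
    have h10 : (uOf x : G) = (uOf y : G) := by rw [h9]
    show x = y
    calc x = (uOf x : G) * (QuotientGroup.mk x : G ⧸ U).out := by
          show x = x * ((QuotientGroup.mk x : G ⧸ U).out)⁻¹ * _; group
      _ = (uOf y : G) * (QuotientGroup.mk y : G ⧸ U).out := by rw [h10, h5]
      _ = y := by show y * ((QuotientGroup.mk y : G ⧸ U).out)⁻¹ * _ = y; group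
  have hFbij : Function.Bijective F :=
    (Fintype.bijective_iff_injective_and_card F).2 ⟨hFinj, hφ.card_eq⟩
  -- the B-side wreath (saturation) property
  have hwr' : ∀ Y ∈ B.basicSets, ¬ Y ⊆ U'fin → ∀ l' ∈ L'fin, ∀ y ∈ Y, l' * y ∈ Y := by
    intro Y hY hYns l' hl' y hy
    obtain ⟨X, hX, rfl⟩ := hφ.surj hY
    have hXns : ¬ X ⊆ Ufin := fun hsub => hYns ((hcorrU X hX).1 hsub)
    obtain ⟨V, hV, hVL, hl'V⟩ := mem_imgSet.1 hl'
    obtain ⟨Z', hZ', hmem⟩ := B.exists_mem (l' * y)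
    obtain ⟨Z, hZ, rfl⟩ := hφ.surj hZ'
    obtain ⟨z, hz⟩ := A.nonempty_mem Z hZ
    have hpos : 0 < structConst (φ V) (φ X) (l' * y) :=
      structConst_pos.2 ⟨l', hl'V, y, hy, rfl⟩
    rw [← hφ.2 V hV X hX Z hZ z hz (l' * y) hmem] at hpos
    obtain ⟨v, hvV, x, hxX, hvx⟩ := structConst_pos.1 hpos
    have hzX : z ∈ X := by
      rw [← hvx]
      exact hwr X hX hXns v (hmemLfin.1 (hVL hvV)) x hxX
    have hZX : Z = X := A.block_eq_of_mem hZ hX hz hzX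
    rw [← hZX]
    exact hmem
  have hsat : ∀ X ∈ A.basicSets, ¬ X ⊆ Ufin → ∀ w : G,
      ((QuotientGroup.mk w : G ⧸ L) ∈ qimg L X ↔ w ∈ X) := by
    intro X hX hns w
    constructor
    · intro hmem
      obtain ⟨x, hx, hmk⟩ := Finset.mem_image.1 hmem
      rw [QuotientGroup.eq] at hmk
      have h1 : (x⁻¹ * w) * x ∈ X := hwr X hX hns _ hmk x hx
      rw [show (x⁻¹ * w) * x = w by rw [mul_comm (x⁻¹ * w) x]; group] at h1
      exact h1
    · intro hmem
      exact mem_qimg_mk hmem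
  have hsat' : ∀ X ∈ A.basicSets, ¬ X ⊆ Ufin → ∀ w' : H,
      ((QuotientGroup.mk w' : H ⧸ L') ∈ qimg L' (φ X) ↔ w' ∈ φ X) := by
    intro X hX hns w'
    constructor
    · intro hmem
      obtain ⟨y', hy', hmk⟩ := Finset.mem_image.1 hmem
      rw [QuotientGroup.eq] at hmk
      have hl' : y'⁻¹ * w' ∈ L'fin := hmemL'.1 hmk
      have hφXns : ¬ φ X ⊆ U'fin := fun hsub => hns ((hcorrU X hX).2 hsub)
      have h1 := hwr' (φ X) (hφ.mem hX) hφXns _ hl' y' hy'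
      rw [show (y'⁻¹ * w') * y' = w' by rw [mul_comm (y'⁻¹ * w') y']; group] at h1
      exact h1
    · intro hmem
      exact mem_qimg_mk hmem
  -- final verification
  refine ⟨F, hFbij, ?_⟩
  intro X hX g h
  by_cases hXU : X ⊆ Ufin
  · by_cases hgh : (QuotientGroup.mk h : G ⧸ U) = QuotientGroup.mk g
    · have hrepeq : (QuotientGroup.mk h : G ⧸ U).out = (QuotientGroup.mk g : G ⧸ U).out := by
        rw [hgh]
      have hT : (X.subtype (· ∈ U)) ∈ AU.basicSets := hAUmem.2 ⟨X, hX, hXU, rfl⟩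
      have key := hp1 (QuotientGroup.mk g) (X.subtype (· ∈ U)) hT (uOf g) (uOf h)
      rw [hφU hXU] at key
      have lhs_iff : h * g⁻¹ ∈ X ↔ uOf h * (uOf g)⁻¹ ∈ X.subtype (· ∈ U) := by
        rw [Finset.mem_subtype]
        have e : ((uOf h * (uOf g)⁻¹ : ↥U) : G) = h * g⁻¹ := by
          show (h * ((QuotientGroup.mk h : G ⧸ U).out)⁻¹) *
            (g * ((QuotientGroup.mk g : G ⧸ U).out)⁻¹)⁻¹ = h * g⁻¹
          rw [hrepeq]
          group
        rw [e]
      have hFprod : F h * (F g)⁻¹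
          = ((fU (pfun (QuotientGroup.mk g) (uOf h)) *
              (fU (pfun (QuotientGroup.mk g) (uOf g)))⁻¹ : ↥U') : H) := by
        show (((fU (pfun (QuotientGroup.mk h) (uOf h)) : ↥U') : H) *
            (fbar (QuotientGroup.mk ((QuotientGroup.mk h : G ⧸ U).out))).out) *
          ((((fU (pfun (QuotientGroup.mk g) (uOf g)) : ↥U') : H)) *
            (fbar (QuotientGroup.mk ((QuotientGroup.mk g : G ⧸ U).out))).out)⁻¹ = _
        rw [hgh]
        show (_ * _) * (_ * _)⁻¹ = ((_ * _⁻¹ : ↥U') : H)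
        push_cast
        group
      have rhs_iff : F h * (F g)⁻¹ ∈ φ X ↔
          fU (pfun (QuotientGroup.mk g) (uOf h)) *
            (fU (pfun (QuotientGroup.mk g) (uOf g)))⁻¹ ∈ (φ X).subtype (· ∈ U') := by
        rw [Finset.mem_subtype, hFprod]
      rw [lhs_iff, rhs_iff]
      exact key
    · have hl : ¬ h * g⁻¹ ∈ X := fun hmem => hgh ((hUiff h g).1 (hmemUfin.1 (hXU hmem)))
      have hr : ¬ F h * (F g)⁻¹ ∈ φ X := by
        intro hmem
        obtain ⟨W, hW, hmemW⟩ := A.exists_mem (h * g⁻¹)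
        have hQW : qimg L W ∈ AGL.basicSets := hAGLmem.2 ⟨W, hW, rfl⟩
        have hin : (QuotientGroup.mk h : G ⧸ L) * (QuotientGroup.mk g)⁻¹ ∈ qimg L W := by
          rw [← QuotientGroup.mk_inv, ← QuotientGroup.mk_mul]
          exact mem_qimg_mk hmemW
        have h1 := (hfbarInd (qimg L W) hQW (QuotientGroup.mk g) (QuotientGroup.mk h)).1 hin
        rw [hφbar W hW] at h1
        have h2 : fbar (QuotientGroup.mk h) * (fbar (QuotientGroup.mk g))⁻¹
            = QuotientGroup.mk (F h * (F g)⁻¹) := by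
          rw [QuotientGroup.mk_mul, QuotientGroup.mk_inv, hFmk, hFmk]
        rw [h2] at h1
        have h3 : (QuotientGroup.mk (F h * (F g)⁻¹) : H ⧸ L') ∈ qimg L' (φ X) :=
          mem_qimg_mk hmem
        have h4 : qimg L' (φ W) = qimg L' (φ X) :=
          qimg_eq_of_mem B hL'setF (hφ.mem hW) (hφ.mem hX) h1 h3
        have h5 : qimg L W = qimg L X := qc1.qimg_eq_pres' hW hX h4
        have h6 : (QuotientGroup.mk (h * g⁻¹) : G ⧸ L) ∈ qimg L X := by
          rw [← h5]
          exact mem_qimg_mk hmemW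
        obtain ⟨x, hx, hmk⟩ := Finset.mem_image.1 h6
        rw [QuotientGroup.eq] at hmk
        have hxU : x ∈ U := hmemUfin.1 (hXU hx)
        have h7 : h * g⁻¹ ∈ U := by
          have h8 := U.mul_mem hxU (hLU hmk)
          rw [show x * (x⁻¹ * (h * g⁻¹)) = h * g⁻¹ by group] at h8
          exact h8
        exact hgh ((hUiff h g).1 h7)
      exact iff_of_false hl hr
  · have h1 : h * g⁻¹ ∈ X ↔ (QuotientGroup.mk (h * g⁻¹) : G ⧸ L) ∈ qimg L X :=
      (hsat X hX hXU _).symm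
    have hQ : qimg L X ∈ AGL.basicSets := hAGLmem.2 ⟨X, hX, rfl⟩
    have h2 := hfbarInd (qimg L X) hQ (QuotientGroup.mk g) (QuotientGroup.mk h)
    have e1 : (QuotientGroup.mk h : G ⧸ L) * (QuotientGroup.mk g)⁻¹
        = QuotientGroup.mk (h * g⁻¹) := by
      rw [QuotientGroup.mk_mul, QuotientGroup.mk_inv]
    rw [e1, hφbar X hX] at h2
    have e2 : fbar (QuotientGroup.mk h) * (fbar (QuotientGroup.mk g))⁻¹
        = QuotientGroup.mk (F h * (F g)⁻¹) := by
      rw [QuotientGroup.mk_mul, QuotientGroup.mk_inv, hFmk, hFmk]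
    rw [e2] at h2
    rw [h1, h2]
    exact hsat' X hX hXU _
end
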